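/- arXiv:2512.04775 — 4 statements merged into one kernel-verified Lean document; each statement's English description precedes it below -/
import Mathlib

section
/- For every positive integer n, the number of overpartitions of n (with one color) satisfies: ̄p(n) ≡ 2 (mod 4) if n is a perfect square, ̄p(n) ≡ 0 (mod 4) if n is twice a perfect square (with c = 1, this gives 2(c+1) = 4 ≡ 0), and ̄p(n) ≡ 0 (mod 4) otherwise. -/
open PowerSeries

/-- `eulerProd m` is the formal power series `f_m = ∏_{j≥1} (1 - q^{jm})`,
defined coefficientwise: for `m ≥ 1` the coefficient of `q^n` only depends on
the factors with `jm ≤ n`, so it equals the corresponding coefficient of the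
finite partial product `∏_{j=1}^{n} (1 - q^{jm})`. -/
noncomputable def eulerProd (m : ℕ) : PowerSeries ℤ :=
  PowerSeries.mk fun n =>
    PowerSeries.coeff n
      (∏ j ∈ Finset.range n, (1 - (PowerSeries.X : PowerSeries ℤ) ^ (m * (j + 1))))

open Finset

namespace S10
abbrev R := ZMod 4

noncomputable def v (k : ℕ) : PowerSeries R :=
  PowerSeries.mk fun n => if k ∣ n ∧ n ≠ 0 then (-1 : R) ^ (n / k + 1) else 0

lemma hv (k : ℕ) (hk : 1 ≤ k) : (1 + X ^ k) * v k = (X : PowerSeries R) ^ k := by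
  ext n
  have h0 : (1 + X ^ k) * v k = v k + v k * X ^ k := by ring
  rw [h0, map_add, coeff_mul_X_pow', coeff_X_pow]
  simp only [v, coeff_mk]
  by_cases h1 : k ∣ n ∧ n ≠ 0
  · obtain ⟨⟨m, rfl⟩, hne⟩ := h1
    have hm : 1 ≤ m := Nat.one_le_iff_ne_zero.2 (by rintro rfl; simp at hne)
    obtain ⟨m', rfl⟩ : ∃ m', m = m' + 1 := ⟨m - 1, by omega⟩
    have hdiv : k * (m' + 1) / k = m' + 1 := Nat.mul_div_cancel_left _ (by omega)
    rw [if_pos ⟨⟨m' + 1, rfl⟩, hne⟩, hdiv, if_pos (by nlinarith)]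
    have hsub : k * (m' + 1) - k = k * m' := by ring_nf; omega
    rw [hsub]
    rcases Nat.eq_zero_or_pos m' with rfl | hm'
    · rw [if_neg (by simp), if_pos (by omega)]
      norm_num
    · have hd2 : k * m' / k = m' := Nat.mul_div_cancel_left _ (by omega)
      rw [if_pos ⟨⟨m', rfl⟩, by positivity⟩, hd2, if_neg (by nlinarith)]
      rw [pow_succ]
      ring
  · rw [if_neg h1]
    have hnk : n ≠ k := by rintro rfl; exact h1 ⟨dvd_rfl, by omega⟩
    rcases Nat.lt_or_ge n k with h | h
    · rw [if_neg (by omega), if_neg hnk]; simp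
    · have h' : k ≤ n := h
      rw [if_pos h', if_neg, if_neg hnk]
      · simp
      · rintro ⟨hd, hne⟩
        have hn0 : n ≠ 0 := by omega
        have : k ∣ n := by
          have := Nat.dvd_add hd (dvd_refl k)
          rwa [Nat.sub_add_cancel h] at this
        exact h1 ⟨this, hn0⟩

end S10

namespace S10

lemma h4 : (4 : PowerSeries R) = 0 := by
  have h : (4 : PowerSeries R) = PowerSeries.C 4 := (map_ofNat (C (R := R)) 4).symm
  rw [h, show (4 : R) = 0 by decide, map_zero]

lemma factor_eq (k : ℕ) (hk : 1 ≤ k) :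
    (1 - X ^ k : PowerSeries R) = (1 + X ^ k) * (1 - 2 * v k) := by
  linear_combination (2 : PowerSeries R) * hv k hk

lemma prod_one_sub_two (N : ℕ) (f : ℕ → PowerSeries R) :
    ∏ j ∈ range N, (1 - 2 * f j) = 1 - 2 * ∑ j ∈ range N, f j := by
  induction N with
  | zero => simp
  | succ N ih =>
    rw [prod_range_succ, ih, sum_range_succ]
    linear_combination (f N * ∑ j ∈ range N, f j) * h4

noncomputable def P (m N : ℕ) : PowerSeries R := ∏ j ∈ range N, (1 - X ^ (m * (j + 1)))
noncomputable def Q (N : ℕ) : PowerSeries R := ∏ j ∈ range N, (1 + X ^ (j + 1))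

lemma P1_mul_Q (N : ℕ) : P 1 N * Q N = P 2 N := by
  unfold P Q
  rw [← prod_mul_distrib]
  refine prod_congr rfl fun j _ => ?_
  rw [one_mul, show 2 * (j + 1) = (j + 1) + (j + 1) by ring, pow_add]
  ring

lemma P1_eq (N : ℕ) : P 1 N = Q N * ∏ j ∈ range N, (1 - 2 * v (j + 1)) := by
  unfold P Q
  rw [← prod_mul_distrib]
  refine prod_congr rfl fun j _ => ?_
  rw [one_mul, factor_eq (j + 1) (by omega)]

lemma key (N : ℕ) : (P 1 N) ^ 2 = P 2 N * (1 - 2 * ∑ j ∈ range N, v (j + 1)) := by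
  rw [← prod_one_sub_two]
  calc (P 1 N) ^ 2 = (P 1 N) * (P 1 N) := sq _
    _ = (P 1 N * Q N) * ∏ j ∈ range N, (1 - 2 * v (j + 1)) := by rw [P1_eq N]; ring
    _ = P 2 N * ∏ j ∈ range N, (1 - 2 * v (j + 1)) := by rw [P1_mul_Q]

end S10

namespace S10

lemma isSquare_iff_even_factorization {n : ℕ} (hn : n ≠ 0) :
    IsSquare n ↔ ∀ p, Even (n.factorization p) := by
  constructor
  · rintro ⟨k, rfl⟩ p
    have hk : k ≠ 0 := by rintro rfl; simp at hn
    rw [Nat.factorization_mul hk hk]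
    simp [Even.add_self]
  · intro h
    refine ⟨n.factorization.prod fun p e => p ^ (e / 2), ?_⟩
    have key : (n.factorization.prod fun p e => p ^ (e / 2)) *
        (n.factorization.prod fun p e => p ^ (e / 2)) = n.factorization.prod (· ^ ·) := by
      rw [← Finsupp.prod_mul]
      refine Finsupp.prod_congr fun p _ => ?_
      rw [← pow_add]
      congr 1
      obtain ⟨r, hr⟩ := h p
      omega
    rw [key, Nat.factorization_prod_pow_eq_self hn]

lemma odd_finset_prod {s : Finset ℕ} {f : ℕ → ℕ} :
    Odd (∏ i ∈ s, f i) ↔ ∀ i ∈ s, Odd (f i) := by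
  classical
  induction s using Finset.induction with
  | empty => simp
  | insert _ _ h ih =>
    rw [Finset.prod_insert h, Nat.odd_mul, ih, Finset.forall_mem_insert]

lemma odd_card_divisors {n : ℕ} (hn : n ≠ 0) :
    Odd n.divisors.card ↔ IsSquare n := by
  rw [Nat.card_divisors hn, isSquare_iff_even_factorization hn, odd_finset_prod]
  constructor
  · intro h p
    by_cases hp : p ∈ n.primeFactors
    · have := h p hp
      rw [Nat.odd_iff] at this
      rw [Nat.even_iff]
      omega
    · rw [← Nat.support_factorization, Finsupp.notMem_support_iff] at hp
      rw [hp]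
      exact Even.zero
  · intro h p _
    have := h p
    rw [Nat.even_iff] at this
    rw [Nat.odd_iff]
    omega
end S10



namespace S10


lemma coeff_eulerProd (m : ℕ) (hm : 1 ≤ m) (n N : ℕ) (h : n ≤ N) :
    PowerSeries.coeff n (eulerProd m) =
      PowerSeries.coeff n (∏ j ∈ range N, (1 - (X : PowerSeries ℤ) ^ (m * (j + 1)))) := by
  induction N, h using Nat.le_induction with
  | base => simp only [eulerProd, coeff_mk]
  | succ N hN ih =>
    rw [prod_range_succ, mul_sub, mul_one, map_sub, coeff_mul_X_pow',
      if_neg (by nlinarith), sub_zero, ih]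

lemma coeff_congr_mul {S : Type*} [CommRing S] (n : ℕ) (f f' g : PowerSeries S)
    (h : ∀ i ≤ n, PowerSeries.coeff i f = PowerSeries.coeff i f') :
    PowerSeries.coeff n (f * g) = PowerSeries.coeff n (f' * g) := by
  rw [PowerSeries.coeff_mul, PowerSeries.coeff_mul]
  refine Finset.sum_congr rfl fun p hp => ?_
  rw [Finset.HasAntidiagonal.mem_antidiagonal] at hp
  rw [h p.1 (by omega)]

noncomputable def E (m : ℕ) : PowerSeries R :=
  PowerSeries.map (Int.castRingHom R) (eulerProd m)

lemma coeff_E (m : ℕ) (hm : 1 ≤ m) (n N : ℕ) (h : n ≤ N) :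
    PowerSeries.coeff n (E m) = PowerSeries.coeff n (P m N) := by
  rw [E, PowerSeries.coeff_map, coeff_eulerProd m hm n N h, P, ← PowerSeries.coeff_map]
  congr 1
  rw [map_prod]
  refine prod_congr rfl fun j _ => ?_
  rw [map_sub, map_one, map_pow, PowerSeries.map_X]

lemma neg_two_mul_neg_one_pow (e : ℕ) : (-2 : R) * (-1) ^ e = 2 := by
  rcases Nat.even_or_odd e with he | he
  · rw [he.neg_one_pow]; decide
  · rw [he.neg_one_pow]; decide

lemma two_mul_nat_cast (c : ℕ) : (2 : R) * (c : ℕ) = if Odd c then 2 else 0 := by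
  rcases Nat.even_or_odd c with ⟨t, rfl⟩ | ⟨t, rfl⟩
  · rw [if_neg (by simp [Nat.not_odd_iff_even, Even.add_self])]
    push_cast
    have : (4 : R) = 0 := by decide
    linear_combination (t : R) * this
  · rw [if_pos ⟨t, rfl⟩]
    push_cast
    have : (4 : R) = 0 := by decide
    linear_combination (t : R) * this

lemma card_filter_divisors (i N : ℕ) (hi : 1 ≤ i) (hiN : i ≤ N) :
    ((range N).filter fun j => (j + 1) ∣ i).card = i.divisors.card := by
  refine Finset.card_bij (fun j _ => j + 1) ?_ ?_ ?_
  · intro j hj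
    rw [Finset.mem_filter] at hj
    rw [Nat.mem_divisors]
    exact ⟨hj.2, by omega⟩
  · intro j₁ h₁ j₂ h₂ h
    have : j₁ + 1 = j₂ + 1 := h
    omega
  · intro d hd
    rw [Nat.mem_divisors] at hd
    have hd1 : 1 ≤ d := Nat.pos_of_dvd_of_pos hd.1 (by omega)
    have hdi : d ≤ i := Nat.le_of_dvd (by omega) hd.1
    refine ⟨d - 1, ?_, show d - 1 + 1 = d by omega⟩
    rw [Finset.mem_filter, Finset.mem_range]
    constructor
    · omega
    · have : d - 1 + 1 = d := by omega
      rw [this]; exact hd.1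

end S10

namespace S10

noncomputable def Sq : PowerSeries R :=
  PowerSeries.mk fun n => if IsSquare n ∧ n ≠ 0 then (1 : R) else 0

noncomputable def theta : PowerSeries R := 1 - 2 * Sq

lemma theta_mul_theta : theta * theta = 1 := by
  unfold theta
  linear_combination (Sq * Sq - Sq) * h4

lemma two_eq_C : (2 : PowerSeries R) = PowerSeries.C 2 := (map_ofNat (C (R := R)) 2).symm

lemma coeff_W (n N : ℕ) (hn : n ≤ N) :
    PowerSeries.coeff n (1 - 2 * ∑ j ∈ range N, v (j + 1)) =
      PowerSeries.coeff n theta := by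
  rw [theta, map_sub, map_sub, two_eq_C, coeff_C_mul, coeff_C_mul]
  congr 1
  rcases Nat.eq_zero_or_pos n with rfl | hn0
  · simp [v, Sq, coeff_mk]
  · rw [map_sum, Finset.mul_sum]
    have hterm : ∀ j ∈ range N, (2 : R) * PowerSeries.coeff n (v (j + 1)) =
        if (j + 1) ∣ n then (2 : R) else 0 := by
      intro j _
      rw [v, coeff_mk]
      by_cases hd : (j + 1) ∣ n
      · rw [if_pos ⟨hd, by omega⟩, if_pos hd]
        have := neg_two_mul_neg_one_pow (n / (j + 1) + 1)
        have h2 : (2 : R) = -(-2) := by decide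
        rw [h2, neg_mul, this]
        decide
      · rw [if_neg (by tauto), if_neg hd, mul_zero]
    rw [Finset.sum_congr rfl hterm, ← Finset.sum_filter, Finset.sum_const, nsmul_eq_mul,
      card_filter_divisors n N hn0 hn, mul_comm, two_mul_nat_cast,
      if_congr (odd_card_divisors (show n ≠ 0 by omega)) rfl rfl]
    rw [Sq, coeff_mk]
    by_cases hs : IsSquare n
    · rw [if_pos hs, if_pos ⟨hs, by omega⟩, mul_one]
    · rw [if_neg hs, if_neg (by tauto), mul_zero]

lemma main_identity : (E 1) ^ 2 = E 2 * theta := by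
  ext n
  set N := n + 1 with hN
  have hE1 : ∀ i ≤ n, PowerSeries.coeff i (E 1) = PowerSeries.coeff i (P 1 N) :=
    fun i hi => coeff_E 1 le_rfl i N (by omega)
  have hE2 : ∀ i ≤ n, PowerSeries.coeff i (E 2) = PowerSeries.coeff i (P 2 N) :=
    fun i hi => coeff_E 2 (by omega) i N (by omega)
  have hW : ∀ i ≤ n, PowerSeries.coeff i (1 - 2 * ∑ j ∈ range N, v (j + 1)) =
      PowerSeries.coeff i theta := fun i hi => coeff_W i N (by omega)
  calc PowerSeries.coeff n ((E 1) ^ 2)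
      = PowerSeries.coeff n (E 1 * E 1) := by rw [sq]
    _ = PowerSeries.coeff n (P 1 N * E 1) := coeff_congr_mul n _ _ _ hE1
    _ = PowerSeries.coeff n (E 1 * P 1 N) := by rw [mul_comm]
    _ = PowerSeries.coeff n (P 1 N * P 1 N) := coeff_congr_mul n _ _ _ hE1
    _ = PowerSeries.coeff n ((P 1 N) ^ 2) := by rw [sq]
    _ = PowerSeries.coeff n (P 2 N * (1 - 2 * ∑ j ∈ range N, v (j + 1))) := by
        rw [key]
    _ = PowerSeries.coeff n ((1 - 2 * ∑ j ∈ range N, v (j + 1)) * P 2 N) := by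
        rw [mul_comm]
    _ = PowerSeries.coeff n (theta * P 2 N) := coeff_congr_mul n _ _ _ hW
    _ = PowerSeries.coeff n (P 2 N * theta) := by rw [mul_comm]
    _ = PowerSeries.coeff n (theta * P 2 N) := by rw [mul_comm]
    _ = PowerSeries.coeff n (theta * E 2) := by
        rw [mul_comm theta (P 2 N), mul_comm theta (E 2)]
        exact (coeff_congr_mul n _ _ _ hE2).symm
    _ = PowerSeries.coeff n (E 2 * theta) := by rw [mul_comm]

end S10

namespace S10

lemma E2_isUnit : IsUnit (E 2) := by
  rw [PowerSeries.isUnit_iff_constantCoeff]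
  have : PowerSeries.constantCoeff (E 2) = PowerSeries.coeff 0 (E 2) := by
    rw [PowerSeries.coeff_zero_eq_constantCoeff]
  rw [this, coeff_E 2 (by omega) 0 0 le_rfl]
  simp [P]

lemma not_isSquare_two_mul_sq {k : ℕ} (hk : k ≠ 0) : ¬ IsSquare (2 * k ^ 2) := by
  intro hs
  have hn : 2 * k ^ 2 ≠ 0 := by positivity
  rw [isSquare_iff_even_factorization hn] at hs
  have h2 := hs 2
  rw [Nat.factorization_mul two_ne_zero (pow_ne_zero 2 hk), Nat.factorization_pow] at h2
  simp only [Nat.Prime.factorization Nat.prime_two, Finsupp.coe_add, Finsupp.coe_smul,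
    Pi.add_apply, Pi.smul_apply, Finsupp.single_eq_same, smul_eq_mul] at h2
  rw [Nat.even_iff] at h2
  omega

end S10


/-- Sellers' congruence for overpartitions (the c = 1 case): if
`a : ℕ → ℤ` is the overpartition counting function, determined by the
generating function identity Σ a(n) qⁿ = f₂ / f₁², then for every positive n,
a(n) ≡ 2 (mod 4) if n is a square, a(n) ≡ 0 (mod 4) if n is twice a square,
and a(n) ≡ 0 (mod 4) otherwise. -/
theorem stmt_10 (a : ℕ → ℤ)
    (ha : PowerSeries.mk a * eulerProd 1 ^ 2 = eulerProd 2) :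
    ∀ n : ℕ, 0 < n →
      ((∃ k : ℕ, n = k ^ 2) → a n ≡ 2 [ZMOD 4]) ∧
      ((∃ k : ℕ, n = 2 * k ^ 2) → a n ≡ 0 [ZMOD 4]) ∧
      ((¬ ∃ k : ℕ, n = k ^ 2) → (¬ ∃ k : ℕ, n = 2 * k ^ 2) → a n ≡ 0 [ZMOD 4]) := by
  classical
  set A : PowerSeries S10.R := PowerSeries.mk fun n => ((a n : ℤ) : S10.R) with hA
  have hmap : A * (S10.E 1) ^ 2 = S10.E 2 := by
    have := congrArg (PowerSeries.map (Int.castRingHom S10.R)) ha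
    rw [map_mul, map_pow] at this
    unfold S10.E
    rw [← this]
    congr 1
  have hAtheta : A * S10.theta = 1 := by
    have h1 : S10.E 2 * (A * S10.theta) = S10.E 2 * 1 := by
      rw [mul_one]
      calc S10.E 2 * (A * S10.theta) = A * ((S10.E 2) * S10.theta) := by ring
        _ = A * (S10.E 1) ^ 2 := by rw [S10.main_identity]
        _ = S10.E 2 := hmap
    exact (S10.E2_isUnit.mul_right_inj).mp h1
  have hAeq : A = S10.theta := by
    calc A = A * (S10.theta * S10.theta) := by rw [S10.theta_mul_theta, mul_one]
      _ = (A * S10.theta) * S10.theta := by ring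
      _ = S10.theta := by rw [hAtheta, one_mul]
  have hcoeff : ∀ n : ℕ, ((a n : ℤ) : S10.R) = PowerSeries.coeff n S10.theta := by
    intro n
    rw [← PowerSeries.coeff_mk n (fun n => ((a n : ℤ) : S10.R)), ← hA, hAeq]
  have htheta_coeff : ∀ n : ℕ, 0 < n → PowerSeries.coeff n S10.theta =
      (if IsSquare n then (2 : S10.R) else 0) := by
    intro n hn
    rw [S10.theta, map_sub, S10.two_eq_C, PowerSeries.coeff_C_mul, S10.Sq,
      PowerSeries.coeff_mk, PowerSeries.coeff_one, if_neg (by omega)]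
    by_cases hs : IsSquare n
    · rw [if_pos ⟨hs, by omega⟩, if_pos hs]
      decide
    · rw [if_neg (by tauto), if_neg hs, mul_zero, sub_zero]
  intro n hn
  refine ⟨?_, ?_, ?_⟩
  · rintro ⟨k, rfl⟩
    have hs : IsSquare (k ^ 2) := ⟨k, by ring⟩
    have : ((a (k ^ 2) : ℤ) : S10.R) = ((2 : ℤ) : S10.R) := by
      rw [hcoeff, htheta_coeff _ hn, if_pos hs]
      decide
    exact (ZMod.intCast_eq_intCast_iff _ _ _).mp this
  · rintro ⟨k, rfl⟩
    have hk : k ≠ 0 := by rintro rfl; simp at hn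
    have hs : ¬ IsSquare (2 * k ^ 2) := S10.not_isSquare_two_mul_sq hk
    have : ((a (2 * k ^ 2) : ℤ) : S10.R) = ((0 : ℤ) : S10.R) := by
      rw [hcoeff, htheta_coeff _ hn, if_neg hs]
      decide
    exact (ZMod.intCast_eq_intCast_iff _ _ _).mp this
  · intro h1 _
    have hs : ¬ IsSquare n := by
      rintro ⟨r, rfl⟩
      exact h1 ⟨r, by ring⟩
    have : ((a n : ℤ) : S10.R) = ((0 : ℤ) : S10.R) := by
      rw [hcoeff, htheta_coeff _ hn, if_neg hs]
      decide
    exact (ZMod.intCast_eq_intCast_iff _ _ _).mp this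
end

section
/- For all positive integers n and c ≥ 1, the number of generalized overcubic partitions ̄a_c(n) satisfies ̄a_c(n) ≡ 2 (mod 4) if n = k^2 for some integer k, ̄a_c(n) ≡ 2(c+1) (mod 4) if n = 2k^2 for some integer k, and ̄a_c(n) ≡ 0 (mod 4) otherwise. -/
open PowerSeries

open Polynomial Finset

namespace OC

local notation "X" => (Polynomial.X : Polynomial ℤ)
local notation "C" => Polynomial.C

noncomputable def qb (m : ℕ) : ℕ → ℕ → Polynomial ℤ
  | _, 0 => 1
  | 0, _+1 => 0
  | M+1, k+1 => qb m M (k+1) * X ^ (2*m*(k+1)) + qb m M k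

lemma qb_zero_right (m M : ℕ) : qb m M 0 = 1 := by cases M <;> rfl

lemma qb_succ (m M k : ℕ) : qb m (M+1) (k+1) = qb m M (k+1) * X ^ (2*m*(k+1)) + qb m M k := rfl

lemma qb_of_lt (m : ℕ) : ∀ M k, M < k → qb m M k = 0 := by
  intro M
  induction M with
  | zero => intro k hk; match k, hk with | k+1, _ => rfl
  | succ M ih =>
    intro k hk
    match k, hk with
    | k+1, hk =>
      rw [qb_succ, ih (k+1) (by omega), ih k (by omega)]
      ring

lemma qb_diag (m : ℕ) : ∀ M, qb m M M = 1 := by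
  intro M
  induction M with
  | zero => rfl
  | succ M ih => rw [qb_succ, ih, qb_of_lt m M (M+1) (by omega)]; ring

lemma Xpow_comb (a b c d : ℕ) (h : a + b = c + d) :
    (X : Polynomial ℤ)^a * X^b = X^c * X^d := by
  rw [← pow_add, ← pow_add, h]

lemma qb_pascal2 (m : ℕ) : ∀ M k, qb m (M+1) (k+1) = qb m M (k+1) + X^(2*m*(M-k)) * qb m M k := by
  intro M
  induction M with
  | zero =>
    intro k
    cases k with
    | zero =>
      rw [qb_succ, qb_of_lt m 0 (0+1) (by omega)]
      simp only [qb_zero_right]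
      ring
    | succ j =>
      rw [qb_succ, qb_of_lt m 0 (j+1+1) (by omega), qb_of_lt m 0 (j+1) (by omega)]
      ring
  | succ M ih =>
    intro k
    cases k with
    | zero =>
      have e1 := qb_succ m (M+1) 0
      have e2 := qb_succ m M 0
      have e3 := ih 0
      rw [qb_zero_right] at e1 e2 e3
      rw [qb_zero_right]
      have hx : (X : Polynomial ℤ)^(2*m*(M+1-0)) = X^(2*m*(M-0)) * X^(2*m*(0+1)) := by
        rw [← pow_add, ← mul_add, show M-0+(0+1) = M+1-0 from by omega]
      linear_combination e1 - e2 + X^(2*m*(0+1)) * e3 - hx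
    | succ j =>
      have e1 := qb_succ m (M+1) (j+1)
      have e2 := qb_succ m M (j+1)
      have e4 := qb_succ m M j
      have e5 := ih j
      rcases le_or_gt (j+1) M with h | h
      · have e3 := ih (j+1)
        have hms : M + 1 - (j+1) = M - j := by omega
        rw [hms]
        have hx : (X : Polynomial ℤ)^(2*m*(M-(j+1))) * X^(2*m*(j+1+1))
            = X^(2*m*(M-j)) * X^(2*m*(j+1)) := by
          apply Xpow_comb
          rw [← mul_add, ← mul_add, show M-(j+1)+(j+1+1) = (M-j)+(j+1) from by omega]
        linear_combination e1 - e2 + X^(2*m*(j+1+1)) * e3 - X^(2*m*(M-j)) * e4 + e5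
          + qb m M (j+1) * hx
      · rcases eq_or_lt_of_le (by omega : M ≤ j) with rfl | h2
        · rw [qb_diag, qb_of_lt m (M+1) (M+1+1) (by omega), qb_diag]
          have : M + 1 - (M+1) = 0 := by omega
          rw [this]
          ring
        · rw [qb_of_lt m (M+1+1) (j+1+1) (by omega), qb_of_lt m (M+1) (j+1+1) (by omega),
            qb_of_lt m (M+1) (j+1) (by omega)]
          ring

lemma qb_symm (m : ℕ) : ∀ M k, k ≤ M → qb m M k = qb m M (M - k) := by
  intro M
  induction M with
  | zero => intro k hk; interval_cases k; rfl
  | succ M ih =>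
    intro k hk
    cases k with
    | zero => rw [qb_zero_right, Nat.sub_zero, qb_diag]
    | succ j =>
      rcases eq_or_lt_of_le hk with h | h
      · rw [← h]
        simp only [Nat.sub_self]
        rw [qb_diag, qb_zero_right]
      · have hj : j + 1 ≤ M := by omega
        have h1 : M + 1 - (j+1) = (M - (j+1)) + 1 := by omega
        have h2 : M - (M - (j+1)) = j + 1 := by omega
        have h3 : M - (j+1) + 1 = M - j := by omega
        have hr : qb m (M+1) (M - (j+1) + 1)
            = qb m M (M-(j+1)+1) + X^(2*m*(j+1)) * qb m M (M-(j+1)) := by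
          have := qb_pascal2 m M (M-(j+1))
          rw [h2] at this
          exact this
        rw [h1, hr, qb_succ, h3, ← ih (j+1) hj, ← ih j (by omega)]
        ring

lemma qb_one_step (m : ℕ) : ∀ M, X^(2*m) * qb m M 1 + 1 = qb m M 1 + X^(2*m*M) := by
  intro M
  induction M with
  | zero =>
    rw [qb_of_lt m 0 1 (by omega)]
    norm_num
  | succ M ih =>
    have e1 : qb m (M+1) 1 = qb m M 1 * X^(2*m) + 1 := by
      have := qb_succ m M 0
      rw [qb_zero_right] at this
      simpa using this
    have hx : (X : Polynomial ℤ)^(2*m) * X^(2*m*M) = X^(2*m*(M+1)) := by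
      rw [← pow_add, show 2*m + 2*m*M = 2*m*(M+1) from by ring]
    linear_combination (X^(2*m) - 1) * e1 + X^(2*m) * ih - hx

lemma qb_tt (m M k : ℕ) : qb m (M+2) (k+2) = X^(2*m*(k+2)) * qb m M (k+2)
    + (1+X^(2*m*(M+1))) * qb m M (k+1) + X^(2*m*(M-k)) * qb m M k := by
  have e1 : qb m (M+2) (k+2) = qb m (M+1) (k+2) * X^(2*m*(k+2)) + qb m (M+1) (k+1) :=
    qb_succ m (M+1) (k+1)
  have e2 : qb m (M+1) (k+2) = qb m M (k+2) + X^(2*m*(M-(k+1))) * qb m M (k+1) :=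
    qb_pascal2 m M (k+1)
  have e3 : qb m (M+1) (k+1) = qb m M (k+1) + X^(2*m*(M-k)) * qb m M k :=
    qb_pascal2 m M k
  rcases le_or_gt (k+1) M with h | h
  · have hx : (X : Polynomial ℤ)^(2*m*(M-(k+1))) * X^(2*m*(k+2)) = X^(2*m*(M+1)) := by
      rw [← pow_add, ← mul_add, show M-(k+1)+(k+2) = M+1 from by omega]
    linear_combination e1 + X^(2*m*(k+2)) * e2 + e3 + qb m M (k+1) * hx
  · have z1 : qb m M (k+1) = 0 := qb_of_lt m M (k+1) h
    have z2 : qb m M (k+2) = 0 := qb_of_lt m M (k+2) (by omega)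
    rcases Nat.lt_or_ge M k with h2 | h2
    · rw [qb_of_lt m (M+2) (k+2) (by omega), z1, z2, qb_of_lt m M k (by omega)]
      ring
    · have hMk : M = k := by omega
      subst hMk
      rw [qb_diag, z1, z2, Nat.sub_self, qb_diag]
      norm_num

lemma qb_mul_prod (m : ℕ) : ∀ M k, k ≤ M →
    qb m M k * ∏ j ∈ range k, (1 - (X : Polynomial ℤ)^(2*m*(j+1)))
      = ∏ i ∈ range k, (1 - (X : Polynomial ℤ)^(2*m*(M-k+(i+1)))) := by
  intro M
  induction M with
  | zero => intro k hk; interval_cases k; simp [qb_zero_right]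
  | succ M ih =>
    intro k hk
    cases k with
    | zero => simp [qb_zero_right]
    | succ j =>
      rcases le_or_gt (j+1) M with h | h
      · have hP : ∏ i ∈ range (j+1), (1 - (X:Polynomial ℤ)^(2*m*(i+1)))
            = (∏ i ∈ range j, (1 - X^(2*m*(i+1)))) * (1 - X^(2*m*(j+1))) :=
          prod_range_succ _ j
        have hIH1 := ih (j+1) h
        have hIH2 := ih j (by omega)
        have hsplit1 : (∏ i ∈ range (j+1), (1 - (X:Polynomial ℤ)^(2*m*(M-(j+1)+(i+1)))))
            = (1 - X^(2*m*(M-j))) * ∏ i ∈ range j, (1 - X^(2*m*(M-j+(i+1)))) := by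
          rw [prod_range_succ', mul_comm]
          congr 1
          · rw [show M-(j+1)+(0+1) = M-j from by omega]
          · apply Finset.prod_congr rfl
            intro i _
            rw [show M-(j+1)+(i+1+1) = M-j+(i+1) from by omega]
        have hsplit2 : (∏ i ∈ range (j+1), (1 - (X:Polynomial ℤ)^(2*m*(M+1-(j+1)+(i+1)))))
            = (∏ i ∈ range j, (1 - X^(2*m*(M-j+(i+1))))) * (1 - X^(2*m*(M+1))) := by
          rw [prod_range_succ]
          congr 1
          · apply Finset.prod_congr rfl
            intro i _
            rw [show M+1-(j+1)+(i+1) = M-j+(i+1) from by omega]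
          · rw [show M+1-(j+1)+(j+1) = M+1 from by omega]
        rw [hsplit1] at hIH1
        have hpas := qb_pascal2 m M j
        have hx : (X:Polynomial ℤ)^(2*m*(M-j)) * X^(2*m*(j+1)) = X^(2*m*(M+1)) := by
          rw [← pow_add, ← mul_add, show M-j+(j+1) = M+1 from by omega]
        rw [hsplit2, hpas, add_mul, hIH1, hP]
        linear_combination (X^(2*m*(M-j)) * (1 - X^(2*m*(j+1)))) * hIH2
          - (∏ i ∈ range j, (1 - (X:Polynomial ℤ)^(2*m*(M-j+(i+1))))) * hx
      · have hj : j = M := by omega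
        subst hj
        rw [qb_diag, one_mul]
        apply Finset.prod_congr rfl
        intro i _
        rw [show j+1-(j+1)+(i+1) = i+1 from by omega]

def ee (N k : ℕ) : ℕ := k^2 + N^2 - 2*(k*N)

lemma ee_cast (N k : ℕ) : (ee N k : ℤ) = ((k:ℤ) - N)^2 := by
  have h : 2*(k*N) ≤ k^2 + N^2 := by
    have := two_mul_le_add_sq k N
    nlinarith
  rw [ee, Nat.cast_sub h]
  push_cast
  ring

lemma ee_eq (N k a b : ℕ) (h : ((a:ℤ)) + ((k:ℤ) - N)^2 = b) :
    a + ee N k = b := by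
  have : ((a + ee N k : ℕ) : ℤ) = (b : ℤ) := by
    push_cast [ee_cast]
    linarith
  exact_mod_cast this

noncomputable def oddpp (m N : ℕ) : Polynomial ℤ :=
  ∏ j ∈ range N, (1 - X^(m*(2*j+1)))

lemma sum_shift1 (f : ℕ → Polynomial ℤ) (n : ℕ) (h1 : f (n+1) = 0) :
    ∑ k ∈ range (n+1), f (k+1) = (∑ k ∈ range (n+1), f k) - f 0 := by
  have t1 := Finset.sum_range_succ' f (n+1)
  have t4 := Finset.sum_range_succ f (n+1)
  linear_combination -t1 + t4 + h1

lemma sum_shift2 (f : ℕ → Polynomial ℤ) (n : ℕ) (h1 : f (n+1) = 0) (h2 : f (n+1+1) = 0) :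
    ∑ k ∈ range (n+1), f (k+1+1) = (∑ k ∈ range (n+1), f k) - f 1 - f 0 := by
  have t1 := Finset.sum_range_succ' f (n+1+1)
  have t2 := Finset.sum_range_succ' (fun k => f (k+1)) (n+1)
  beta_reduce at t2
  norm_num at t2
  have t3 := Finset.sum_range_succ f (n+1+1)
  have t4 := Finset.sum_range_succ f (n+1)
  linear_combination -t2 - t1 + t3 + t4 + h1 + h2

theorem key_I (m : ℕ) : ∀ N, oddpp m N ^ 2
    = ∑ k ∈ range (2*N+1), (-1)^(N+k) * X^(m * ee N k) * qb m (2*N) k := by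
  intro N
  induction N with
  | zero => norm_num [oddpp, ee, qb_zero_right]
  | succ N ih =>
    have hodd : oddpp m (N+1) = oddpp m N * (1 - X^(m*(2*N+1))) := by
      unfold oddpp
      exact prod_range_succ _ N
    rw [hodd, mul_pow, ih]
    simp only [show (2:ℕ)*(N+1) = 2*N+1+1 from by ring]
    set f : ℕ → Polynomial ℤ :=
      fun k => (-1)^(N+1+k) * X^(m * ee (N+1) k) * qb m (2*N+1+1) k with hf
    set g : ℕ → Polynomial ℤ :=
      fun k => (-1)^(N+k) * X^(m * ee N k) * qb m (2*N) k with hg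
    have z1 : g (2*N+1) = 0 := by
      rw [hg]
      simp only
      rw [qb_of_lt m (2*N) (2*N+1) (by omega)]
      ring
    have z2 : g (2*N+1+1) = 0 := by
      rw [hg]
      simp only
      rw [qb_of_lt m (2*N) (2*N+1+1) (by omega)]
      ring
    have e1 := Finset.sum_range_succ' f (2*N+1+1)
    have e2 := Finset.sum_range_succ' (fun i => f (i+1)) (2*N+1)
    beta_reduce at e2
    have hterm : ∀ k ∈ range (2*N+1), f (k+1+1)
        = -(X^(m*(2*N+1))) * g (k+1+1) + (1+X^(2*m*(2*N+1))) * g (k+1)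
          + -(X^(m*(2*N+1))) * g k := by
      intro k hk
      have hkle : k ≤ 2*N := by
        simp only [mem_range] at hk
        omega
      rw [hf, hg]
      simp only
      have htt := qb_tt m (2*N) k
      have hx1 : m * ee (N+1) (k+1+1) + 2*m*(k+2) = m * ee N (k+1+1) + m*(2*N+1) := by
        have h1 := ee_cast (N+1) (k+1+1)
        have h2 := ee_cast N (k+1+1)
        have : ((m * ee (N+1) (k+1+1) + 2*m*(k+2) : ℕ) : ℤ)
            = ((m * ee N (k+1+1) + m*(2*N+1) : ℕ) : ℤ) := by
          push_cast [h1, h2]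
          ring
        exact_mod_cast this
      have hx2 : m * ee (N+1) (k+1+1) = m * ee N (k+1) + 0 := by
        have h1 := ee_cast (N+1) (k+1+1)
        have h2 := ee_cast N (k+1)
        have : ((m * ee (N+1) (k+1+1) : ℕ) : ℤ) = ((m * ee N (k+1) + 0 : ℕ) : ℤ) := by
          push_cast [h1, h2]
          ring
        exact_mod_cast this
      have hx3 : m * ee (N+1) (k+1+1) + 2*m*(2*N-k) = m * ee N k + m*(2*N+1) := by
        have h1 := ee_cast (N+1) (k+1+1)
        have h2 := ee_cast N k
        have hsub : ((2*N - k : ℕ) : ℤ) = 2*(N:ℤ) - k := by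
          omega
        have : ((m * ee (N+1) (k+1+1) + 2*m*(2*N-k) : ℕ) : ℤ)
            = ((m * ee N k + m*(2*N+1) : ℕ) : ℤ) := by
          push_cast [h1, h2, hsub]
          ring
        exact_mod_cast this
      have hXx1 : (X:Polynomial ℤ)^(m * ee (N+1) (k+1+1)) * X^(2*m*(k+2))
          = X^(m * ee N (k+1+1)) * X^(m*(2*N+1)) := by
        rw [← pow_add, ← pow_add, hx1]
      have hXx2 : (X:Polynomial ℤ)^(m * ee (N+1) (k+1+1)) = X^(m * ee N (k+1)) := by
        rw [hx2]
        norm_num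
      have hXx3 : (X:Polynomial ℤ)^(m * ee (N+1) (k+1+1)) * X^(2*m*(2*N-k))
          = X^(m * ee N k) * X^(m*(2*N+1)) := by
        rw [← pow_add, ← pow_add, hx3]
      have hsgn : ((-1 : Polynomial ℤ))^(N+1+(k+1+1)) = -((-1)^(N+k)) := by
        rw [show N+1+(k+1+1) = (N+k)+3 from by ring, pow_add]
        norm_num
      have hsgn2 : ((-1 : Polynomial ℤ))^(N+(k+1+1)) = (-1)^(N+k) := by
        rw [show N+(k+1+1) = (N+k)+2 from by ring, pow_add]
        norm_num
      have hsgn3 : ((-1 : Polynomial ℤ))^(N+(k+1)) = -((-1)^(N+k)) := by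
        rw [show N+(k+1) = (N+k)+1 from by ring, pow_add]
        norm_num
      rw [show (k+1+1 : ℕ) = k+2 from rfl] at htt ⊢
      rw [htt, hsgn, hsgn2, hsgn3]
      linear_combination (-((-1:Polynomial ℤ)^(N+k))) * qb m (2*N) (k+2) * hXx1
        + (-((-1:Polynomial ℤ)^(N+k))) * (1+X^(2*m*(2*N+1))) * qb m (2*N) (k+1) * hXx2
        + (-((-1:Polynomial ℤ)^(N+k))) * qb m (2*N) k * hXx3
    have e3 : (∑ k ∈ range (2*N+1), f (k+1+1))
        = ∑ k ∈ range (2*N+1), (-(X^(m*(2*N+1))) * g (k+1+1)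
            + (1+X^(2*m*(2*N+1))) * g (k+1) + -(X^(m*(2*N+1))) * g k) :=
      Finset.sum_congr rfl hterm
    have s2 := sum_shift2 g (2*N) z1 z2
    have s1 := sum_shift1 g (2*N) z1
    rw [e1, e2, e3, Finset.sum_add_distrib, Finset.sum_add_distrib,
      ← Finset.mul_sum, ← Finset.mul_sum, ← Finset.mul_sum, s2, s1]
    have hg0 : g 0 = (-1)^N * X^(m*(N^2)) := by
      rw [hg]
      simp only
      rw [qb_zero_right, show ee N 0 = N^2 from by simp [ee]]
      ring
    have hg1 : g 1 = (-1)^(N+1) * X^(m * ee N 1) * qb m (2*N) 1 := by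
      rw [hg]
    have hf0 : f 0 = -((-1)^N * X^(m*((N+1)^2))) := by
      rw [hf]
      simp only
      rw [qb_zero_right, show ee (N+1) 0 = (N+1)^2 from by simp [ee]]
      ring
    have heef1 : ee (N+1) (0+1) = N^2 := by
      have : ((ee (N+1) (0+1) : ℕ) : ℤ) = ((N^2 : ℕ) : ℤ) := by
        push_cast [ee_cast]
        ring
      exact_mod_cast this
    have hf1 : f (0+1) = (-1)^N * X^(m*(N^2)) * qb m (2*N+1+1) 1 := by
      rw [hf]
      simp only
      rw [heef1]
      ring
    have hq1 : qb m (2*N+1+1) 1 = qb m (2*N+1) 1 * X^(2*m) + 1 := by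
      have := qb_succ m (2*N+1) 0
      rw [qb_zero_right] at this
      simpa using this
    have hq2 : qb m (2*N+1) 1 = qb m (2*N) 1 * X^(2*m) + 1 := by
      have := qb_succ m (2*N) 0
      rw [qb_zero_right] at this
      simpa using this
    have hstep := qb_one_step m (2*N)
    have hx5 : (X:Polynomial ℤ)^(m*(2*N+1)) * X^(m * ee N 1) = X^(m*(N^2+2)) := by
      rw [← pow_add]
      congr 1
      have : ((m*(2*N+1) + m * ee N 1 : ℕ) : ℤ) = ((m*(N^2+2) : ℕ) : ℤ) := by
        push_cast [ee_cast]
        ring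
      exact_mod_cast this
    rw [hg0, hg1, hf0, hf1]
    linear_combination ((-1:Polynomial ℤ)^N * qb m (2*N) 1) * hx5
      - ((-1:Polynomial ℤ)^N * X^(m*(N^2))) * hq1
      - ((-1:Polynomial ℤ)^N * X^(m*(N^2)) * X^(2*m)) * hq2
      - ((-1:Polynomial ℤ)^N * X^(m*(N^2)) * X^(2*m)) * hstep

noncomputable def pp (m N : ℕ) : Polynomial ℤ := ∏ j ∈ range N, (1 - X^(m*(j+1)))

lemma pp_coe (m N : ℕ) : ((pp m N : Polynomial ℤ) : PowerSeries ℤ)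
    = ∏ j ∈ range N, (1 - (PowerSeries.X : PowerSeries ℤ)^(m*(j+1))) := by
  rw [pp, ← Polynomial.coeToPowerSeries.ringHom_apply, map_prod]
  apply prod_congr rfl
  intro j _
  rw [map_sub, map_one, map_pow]
  rw [show Polynomial.coeToPowerSeries.ringHom (X : Polynomial ℤ) = PowerSeries.X from
    Polynomial.coe_X]

lemma prod_one_sub_pow (d : ℕ) (s : Finset ℕ) (e : ℕ → ℕ) (he : ∀ i ∈ s, d ≤ e i) :
    ∃ gp : Polynomial ℤ, ∏ i ∈ s, (1 - X^(e i)) = 1 + X^d * gp := by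
  induction s using Finset.induction_on with
  | empty => exact ⟨0, by simp⟩
  | insert _ _ hnotmem ih =>
    rename_i a s
    obtain ⟨gp, hgp⟩ := ih (fun i hi => he i (Finset.mem_insert_of_mem hi))
    refine ⟨gp - X^(e a - d) - X^(e a - d) * X^d * gp - X^(e a - d) * X^d * gp * 0, ?_⟩
    rw [Finset.prod_insert hnotmem, hgp]
    have hxa : (X : Polynomial ℤ)^(e a) = X^d * X^(e a - d) := by
      rw [← pow_add]
      congr 1
      have := he a (Finset.mem_insert_self a s)
      omega
    rw [hxa]
    ring

lemma coeff_mul_one_add (P gp : Polynomial ℤ) (d i : ℕ) (h : i < d) :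
    (P * (1 + X^d * gp)).coeff i = P.coeff i := by
  have : P * (1 + X^d * gp) = P + (P * gp) * X^d := by ring
  rw [this, Polynomial.coeff_add, Polynomial.coeff_mul_X_pow']
  simp [Nat.not_le.mpr h]

lemma le_mul_of_one_le (m x d : ℕ) (hm : 1 ≤ m) (h : d ≤ x) : d ≤ m*x :=
  le_trans h (Nat.le_mul_of_pos_left x (by omega))

lemma le_mul2 (m x d : ℕ) (hm : 1 ≤ m) (h : d ≤ 2*x) : d ≤ 2*m*x :=
  le_trans h (Nat.mul_le_mul_right x (by omega))

lemma pp_add (m M K : ℕ) : pp m (M + K) = pp m M * ∏ j ∈ range K, (1 - X^(m*(M+j+1))) := by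
  rw [pp, pp, Finset.prod_range_add]

lemma pp_stable (m : ℕ) (hm : 1 ≤ m) (i N N' : ℕ) (hiN : i ≤ N) (hN : N ≤ N') :
    (pp m N').coeff i = (pp m N).coeff i := by
  obtain ⟨K, rfl⟩ : ∃ K, N' = N + K := ⟨N' - N, by omega⟩
  obtain ⟨gp, hgp⟩ := prod_one_sub_pow (i+1) (range K) (fun j => m*(N + j+1))
    (fun j _ => le_mul_of_one_le m _ _ hm (by omega))
  rw [pp_add, hgp, coeff_mul_one_add _ _ _ _ (by omega)]

lemma coeff_eulerProd (m : ℕ) (hm : 1 ≤ m) (i N : ℕ) (hiN : i ≤ N) :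
    PowerSeries.coeff i (eulerProd m) = (pp m N).coeff i := by
  rw [eulerProd, PowerSeries.coeff_mk, ← pp_coe, Polynomial.coeff_coe]
  exact (pp_stable m hm i i N le_rfl hiN).symm

lemma pp_split (m : ℕ) : ∀ N, pp m (2*N) = oddpp m N * pp (2*m) N := by
  intro N
  induction N with
  | zero => simp [pp, oddpp]
  | succ N ih =>
    have h1 : pp m (2*(N+1)) = pp m (2*N) * (1 - X^(m*(2*N+1))) * (1 - X^(m*(2*N+1+1))) := by
      rw [pp, pp, show 2*(N+1) = (2*N+1)+1 from by ring, prod_range_succ, prod_range_succ]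
    have h2 : oddpp m (N+1) = oddpp m N * (1 - X^(m*(2*N+1))) := by
      rw [oddpp, oddpp, prod_range_succ]
    have h3 : pp (2*m) (N+1) = pp (2*m) N * (1 - X^(2*m*(N+1))) := by
      rw [pp, pp, prod_range_succ]
    rw [h1, h2, h3, ih, show m*(2*N+1+1) = 2*m*(N+1) from by ring]
    ring

lemma qb_pp (m N k : ℕ) (hm : 1 ≤ m) (hk : k ≤ N) :
    ∃ gp : Polynomial ℤ, qb m (2*N) k * pp (2*m) N = 1 + X^(2*k+2) * gp := by
  have hps : pp (2*m) N = (∏ j ∈ range k, (1 - (X:Polynomial ℤ)^(2*m*(j+1))))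
      * ∏ j ∈ range (N-k), (1 - X^(2*m*(k+j+1))) := by
    rw [show N = k + (N-k) from by omega, pp_add, pp,
      show k + (N-k) - k = N - k from by omega]
  have hqp := qb_mul_prod m (2*N) k (by omega)
  obtain ⟨g1, hg1⟩ := prod_one_sub_pow (2*k+2) (range k) (fun i => 2*m*(2*N-k+(i+1)))
    (fun i hi => by
      simp only [mem_range] at hi
      exact le_mul2 m _ _ hm (by omega))
  obtain ⟨g2, g2h⟩ := prod_one_sub_pow (2*k+2) (range (N-k)) (fun j => 2*m*(k+j+1))
    (fun j _ => le_mul2 m _ _ hm (by omega))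
  have hg2 := g2h
  refine ⟨g1 + g2 + X^(2*k+2) * g1 * g2, ?_⟩
  calc qb m (2*N) k * pp (2*m) N
      = (qb m (2*N) k * ∏ j ∈ range k, (1 - X^(2*m*(j+1))))
        * ∏ j ∈ range (N-k), (1 - X^(2*m*(k+j+1))) := by rw [hps]; ring
    _ = (1 + X^(2*k+2) * g1) * (1 + X^(2*k+2) * g2) := by rw [hqp, hg1, hg2]
    _ = 1 + X^(2*k+2) * (g1 + g2 + X^(2*k+2) * g1 * g2) := by ring

open scoped Classical in
noncomputable def thZ (m n : ℕ) : ℤ :=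
  if n = 0 then 1 else if ∃ k, n = m * k^2 then 2 * (-1)^(Nat.sqrt (n / m)) else 0

noncomputable def theta (m : ℕ) : PowerSeries ℤ := PowerSeries.mk (thZ m)

noncomputable def thpoly (m N : ℕ) : Polynomial ℤ :=
  ∑ k ∈ range (2*N+1), (-1)^(N+k) * X^(m * ee N k)

lemma ee_left (N k : ℕ) (h : k ≤ N) : ee N k = (N - k)^2 := by
  have : ((ee N k : ℕ) : ℤ) = (((N-k)^2 : ℕ) : ℤ) := by
    rw [ee_cast]
    push_cast [Nat.cast_sub h]
    ring
  exact_mod_cast this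

lemma ee_right (N k : ℕ) (h : N ≤ k) : ee N k = (k - N)^2 := by
  have : ((ee N k : ℕ) : ℤ) = (((k-N)^2 : ℕ) : ℤ) := by
    rw [ee_cast]
    push_cast [Nat.cast_sub h]
    ring
  exact_mod_cast this

lemma ee_diag (N : ℕ) : ee N N = 0 := by
  rw [ee_left N N le_rfl, Nat.sub_self]
  ring

lemma ee_eq_zero (N k : ℕ) (h : ee N k = 0) : k = N := by
  have hc := ee_cast N k
  rw [h] at hc
  have h2 : ((k:ℤ) - N)^2 = 0 := by exact_mod_cast hc.symm
  have h3 : (k:ℤ) - N = 0 := pow_eq_zero_iff (by norm_num : 2 ≠ 0) |>.mp h2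
  omega

lemma int_sq_eq (a b : ℤ) (h : a^2 = b^2) : a = b ∨ a = -b := by
  have : (a - b) * (a + b) = 0 := by linear_combination h
  rcases mul_eq_zero.mp this with h1 | h1
  · left; omega
  · right; omega

lemma neg_one_pow_int (a b : ℕ) (h : a % 2 = b % 2) : ((-1 : ℤ))^a = (-1)^b := by
  rcases Nat.even_or_odd a with he | ho
  · rw [he.neg_one_pow, Even.neg_one_pow]
    rcases he with ⟨c, hc⟩
    exact ⟨b/2, by omega⟩
  · rw [ho.neg_one_pow, Odd.neg_one_pow]
    rcases ho with ⟨c, hc⟩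
    exact ⟨b/2, by omega⟩

lemma coeff_thpoly (m N i : ℕ) (hm : 1 ≤ m) (hi : i ≤ N) :
    (thpoly m N).coeff i = thZ m i := by
  classical
  rw [thpoly, Polynomial.finset_sum_coeff]
  have hterm : ∀ k, (((-1:Polynomial ℤ))^(N+k) * X^(m * ee N k)).coeff i
      = (-1)^(N+k) * (if i = m * ee N k then 1 else 0) := by
    intro k
    rw [show ((-1:Polynomial ℤ))^(N+k) = C ((-1:ℤ)^(N+k)) from by rw [map_pow, map_neg, map_one],
      Polynomial.coeff_C_mul, Polynomial.coeff_X_pow]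
  simp only [hterm]
  rcases Nat.eq_zero_or_pos i with rfl | hipos
  · rw [thZ, if_pos rfl]
    rw [Finset.sum_eq_single_of_mem N (by simp [mem_range]; omega)]
    · rw [ee_diag, Nat.mul_zero, if_pos rfl, mul_one]
      exact Even.neg_one_pow ⟨N, by ring⟩
    · intro b _ hbN
      rw [if_neg, mul_zero]
      intro hb
      have : ee N b = 0 := by
        rcases Nat.mul_eq_zero.mp hb.symm with h | h
        · omega
        · exact h
      exact hbN (ee_eq_zero N b this)
  · by_cases hrep : ∃ k0, i = m * k0^2
    · obtain ⟨k0, hk0⟩ := hrep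
      have hk0pos : 1 ≤ k0 := by
        rcases Nat.eq_zero_or_pos k0 with rfl | h
        · simp at hk0; omega
        · omega
      have hk0N : k0 ≤ N := by
        have h1 : k0 ≤ k0^2 := Nat.le_self_pow (by omega) k0
        have h2 : k0^2 ≤ m * k0^2 := Nat.le_mul_of_pos_left _ (by omega)
        omega
      have hthz : thZ m i = 2 * (-1)^k0 := by
        rw [thZ, if_neg (by omega), if_pos ⟨k0, hk0⟩, hk0,
          Nat.mul_div_cancel_left _ (by omega : 0 < m)]
        congr 2
        rw [pow_two]
        exact Nat.sqrt_eq k0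
      rw [hthz]
      -- condition characterization
      have hcond : ∀ k, (i = m * ee N k) ↔ (k = N + k0 ∨ k = N - k0) := by
        intro k
        constructor
        · intro h
          have hee : ee N k = k0^2 := by
            rw [hk0] at h
            exact (Nat.eq_of_mul_eq_mul_left (by omega) h.symm)
          have hc := ee_cast N k
          rw [hee] at hc
          have : ((k:ℤ) - N)^2 = (k0:ℤ)^2 := by push_cast at hc ⊢; linarith
          rcases int_sq_eq _ _ this with h1 | h1
          · left; omega
          · right; omega
        · rintro (rfl | rfl)
          · rw [ee_right N _ (by omega), show N + k0 - N = k0 from by omega, hk0]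
          · rw [ee_left N _ (by omega), show N - (N - k0) = k0 from by omega, hk0]
      have hmem1 : N + k0 ∈ range (2*N+1) := by simp [mem_range]; omega
      have hmem2 : N - k0 ∈ (range (2*N+1)).erase (N + k0) := by
        rw [Finset.mem_erase]
        constructor
        · omega
        · simp [mem_range]; omega
      rw [← Finset.add_sum_erase _ _ hmem1, ← Finset.add_sum_erase _ _ hmem2,
        Finset.sum_eq_zero, if_pos ((hcond (N+k0)).mpr (Or.inl rfl)),
        if_pos ((hcond (N-k0)).mpr (Or.inr rfl))]
      · rw [add_zero, mul_one, mul_one]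
        have hp1 : ((-1:ℤ))^(N+(N+k0)) = (-1)^k0 := neg_one_pow_int _ _ (by omega)
        have hp2 : ((-1:ℤ))^(N+(N-k0)) = (-1)^k0 := neg_one_pow_int _ _ (by omega)
        rw [hp1, hp2]
        ring
      · intro b hb
        rw [Finset.mem_erase, Finset.mem_erase] at hb
        rw [if_neg, mul_zero]
        intro hcb
        rcases (hcond b).mp hcb with h | h
        · exact hb.2.1 h
        · exact hb.1 h
    · rw [thZ, if_neg (by omega), if_neg hrep]
      apply Finset.sum_eq_zero
      intro k _
      rw [if_neg, mul_zero]
      intro hik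
      apply hrep
      rcases le_or_gt k N with h | h
      · exact ⟨N - k, by rw [hik, ee_left N k h]⟩
      · exact ⟨k - N, by rw [hik, ee_right N k (by omega)]⟩

lemma term_eq (m n k : ℕ) (hm : 1 ≤ m) (hk : k ≤ n) :
    (X^(m * ee n k) * (qb m (2*n) k * (pp (2*m) n * pp (2*m) n))).coeff n
      = (X^(m * ee n k) * pp (2*m) n).coeff n := by
  obtain ⟨gp, hgp⟩ := qb_pp m n k hm hk
  have hkey : X^(m * ee n k) * (qb m (2*n) k * (pp (2*m) n * pp (2*m) n))
      = X^(m * ee n k) * pp (2*m) n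
        + (gp * pp (2*m) n) * X^(m * ee n k + (2*k+2)) := by
    calc X^(m * ee n k) * (qb m (2*n) k * (pp (2*m) n * pp (2*m) n))
        = X^(m * ee n k) * ((qb m (2*n) k * pp (2*m) n) * pp (2*m) n) := by ring
      _ = X^(m * ee n k) * ((1 + X^(2*k+2) * gp) * pp (2*m) n) := by rw [hgp]
      _ = X^(m * ee n k) * pp (2*m) n
            + (gp * pp (2*m) n) * (X^(m * ee n k) * X^(2*k+2)) := by ring
      _ = _ := by rw [← pow_add]
  rw [hkey, Polynomial.coeff_add, Polynomial.coeff_mul_X_pow']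
  have hbig : ¬ (m * ee n k + (2*k+2) ≤ n) := by
    rw [ee_left n k hk]
    have h1 : (n-k) ≤ (n-k)^2 + 1 := by nlinarith [sq_nonneg ((n:ℤ) - k)]
    have h2 : (n-k)^2 ≤ m * (n-k)^2 := Nat.le_mul_of_pos_left _ (by omega)
    omega
  rw [if_neg hbig, add_zero]

lemma coeff_mul_congr (P P' Q Q' : PowerSeries ℤ) (n : ℕ)
    (hP : ∀ i ≤ n, PowerSeries.coeff i P = PowerSeries.coeff i P')
    (hQ : ∀ i ≤ n, PowerSeries.coeff i Q = PowerSeries.coeff i Q') :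
    PowerSeries.coeff n (P * Q) = PowerSeries.coeff n (P' * Q') := by
  rw [PowerSeries.coeff_mul, PowerSeries.coeff_mul]
  apply Finset.sum_congr rfl
  intro p hp
  rw [Finset.HasAntidiagonal.mem_antidiagonal] at hp
  rw [hP p.1 (by omega), hQ p.2 (by omega)]

theorem gauss (m : ℕ) (hm : 1 ≤ m) : eulerProd m ^ 2 = eulerProd (2*m) * theta m := by
  ext n
  rcases Nat.eq_zero_or_pos n with rfl | hn
  · rw [PowerSeries.coeff_zero_eq_constantCoeff, map_mul, map_pow]
    have h1 : ∀ m', PowerSeries.constantCoeff (eulerProd m') = 1 := by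
      intro m'
      rw [eulerProd, ← PowerSeries.coeff_zero_eq_constantCoeff, PowerSeries.coeff_mk]
      simp
    have h2 : PowerSeries.constantCoeff (theta m) = 1 := by
      rw [theta, ← PowerSeries.coeff_zero_eq_constantCoeff, PowerSeries.coeff_mk, thZ]
      simp
    rw [h1, h1, h2, one_pow, one_mul]
  · have hcoe1 : ∀ i ≤ n, PowerSeries.coeff i (eulerProd m)
        = PowerSeries.coeff i ((pp m (2*n) : Polynomial ℤ) : PowerSeries ℤ) := by
      intro i hi
      rw [Polynomial.coeff_coe]
      exact coeff_eulerProd m hm i (2*n) (by omega)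
    have hcoe2 : ∀ i ≤ n, PowerSeries.coeff i (eulerProd (2*m))
        = PowerSeries.coeff i ((pp (2*m) n : Polynomial ℤ) : PowerSeries ℤ) := by
      intro i hi
      rw [Polynomial.coeff_coe]
      exact coeff_eulerProd (2*m) (by omega) i n (by omega)
    have hcoe3 : ∀ i ≤ n, PowerSeries.coeff i (theta m)
        = PowerSeries.coeff i ((thpoly m n : Polynomial ℤ) : PowerSeries ℤ) := by
      intro i hi
      rw [Polynomial.coeff_coe, theta, PowerSeries.coeff_mk, coeff_thpoly m n i hm (by omega)]
    have hL : PowerSeries.coeff n (eulerProd m ^ 2) = ((pp m (2*n))^2).coeff n := by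
      rw [pow_two, coeff_mul_congr _ _ _ _ n hcoe1 hcoe1, ← Polynomial.coe_mul,
        Polynomial.coeff_coe, ← pow_two]
    have hR : PowerSeries.coeff n (eulerProd (2*m) * theta m)
        = ((pp (2*m) n) * thpoly m n).coeff n := by
      rw [coeff_mul_congr _ _ _ _ n hcoe2 hcoe3, ← Polynomial.coe_mul, Polynomial.coeff_coe]
    rw [hL, hR, pp_split m n, mul_pow, key_I m n, Finset.sum_mul, thpoly, Finset.mul_sum,
      Polynomial.finset_sum_coeff, Polynomial.finset_sum_coeff]
    apply Finset.sum_congr rfl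
    intro k hk
    rw [mem_range] at hk
    have hsgn : ∀ p : Polynomial ℤ, (((-1:Polynomial ℤ))^(n+k) * p).coeff n
        = (-1)^(n+k) * p.coeff n := by
      intro p
      rw [show ((-1:Polynomial ℤ))^(n+k) = C ((-1:ℤ)^(n+k)) from by rw [map_pow, map_neg, map_one],
        Polynomial.coeff_C_mul]
    have e1 : (-1:Polynomial ℤ)^(n+k) * X^(m * ee n k) * qb m (2*n) k * pp (2*m) n ^ 2
        = (-1:Polynomial ℤ)^(n+k) * (X^(m * ee n k) * (qb m (2*n) k * (pp (2*m) n * pp (2*m) n))) := by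
      ring
    have e2 : pp (2*m) n * ((-1:Polynomial ℤ)^(n+k) * X^(m * ee n k))
        = (-1:Polynomial ℤ)^(n+k) * (X^(m * ee n k) * pp (2*m) n) := by
      ring
    rw [e1, e2, hsgn, hsgn]
    congr 1
    rcases le_or_gt k n with hkn | hkn
    · exact term_eq m n k hm hkn
    · have hsym : qb m (2*n) k = qb m (2*n) (2*n - k) := qb_symm m (2*n) k (by omega)
      have hee : ee n k = ee n (2*n - k) := by
        rw [ee_right n k (by omega), ee_left n (2*n-k) (by omega),
          show n - (2*n - k) = k - n from by omega]
      rw [hsym, hee]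
      exact term_eq m n (2*n - k) hm (by omega)

-- ZMod 4 layer
open scoped Classical in
noncomputable def sqm (m : ℕ) : PowerSeries (ZMod 4) :=
  PowerSeries.mk fun n => if n ≠ 0 ∧ ∃ k, n = m * k^2 then 1 else 0

noncomputable def rho : ℤ →+* ZMod 4 := Int.castRingHom (ZMod 4)

lemma two_mul_two : (PowerSeries.C (R := ZMod 4) 2) * (PowerSeries.C (R := ZMod 4) 2) = 0 := by
  rw [← map_mul, show (2*2 : ZMod 4) = 0 from by decide, map_zero]

lemma sq_one_add (V : PowerSeries (ZMod 4)) :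
    (1 + PowerSeries.C (R := ZMod 4) 2 * V) * (1 + PowerSeries.C (R := ZMod 4) 2 * V) = 1 := by
  have h2 : (2 : PowerSeries (ZMod 4)) = PowerSeries.C (R := ZMod 4) 2 := by
    rw [← map_ofNat (PowerSeries.C (R := ZMod 4)) 2]
  linear_combination (V * V + V) * two_mul_two + (PowerSeries.C (R := ZMod 4) 2 * V) * h2

lemma map_theta (m : ℕ) : PowerSeries.map rho (theta m)
    = 1 + PowerSeries.C (R := ZMod 4) 2 * sqm m := by
  ext n
  rw [PowerSeries.coeff_map, theta, PowerSeries.coeff_mk, map_add, PowerSeries.coeff_one,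
    PowerSeries.coeff_C_mul, sqm, PowerSeries.coeff_mk]
  rcases Nat.eq_zero_or_pos n with rfl | hn
  · rw [thZ, if_pos rfl, if_pos rfl, if_neg (by simp), mul_zero, add_zero]
    norm_num [rho]
  · rw [if_neg (by omega)]
    by_cases hrep : ∃ k, n = m * k^2
    · rw [thZ, if_neg (by omega), if_pos hrep, if_pos ⟨by omega, hrep⟩, mul_one, zero_add]
      show ((2 * (-1 : ℤ)^(Nat.sqrt (n / m)) : ℤ) : ZMod 4) = 2
      rcases Nat.even_or_odd (Nat.sqrt (n / m)) with hp | hp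
      · rw [hp.neg_one_pow]
        decide
      · rw [hp.neg_one_pow]
        decide
    · rw [thZ, if_neg (by omega), if_neg hrep, if_neg (by tauto), mul_zero, zero_add]
      norm_num [rho]

lemma eulerProd_const (m' : ℕ) : PowerSeries.constantCoeff (eulerProd m') = 1 := by
  rw [eulerProd, ← PowerSeries.coeff_zero_eq_constantCoeff, PowerSeries.coeff_mk]
  simp

lemma isUnit_mapE (m' : ℕ) : IsUnit (PowerSeries.map rho (eulerProd m')) := by
  rw [PowerSeries.isUnit_iff_constantCoeff]
  have : PowerSeries.constantCoeff (PowerSeries.map rho (eulerProd m'))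
      = rho (PowerSeries.constantCoeff (eulerProd m')) := by
    rw [← PowerSeries.coeff_zero_eq_constantCoeff, PowerSeries.coeff_map,
      ← PowerSeries.coeff_zero_eq_constantCoeff]
  rw [this, eulerProd_const, map_one]
  exact isUnit_one

lemma main_eq (c : ℕ) (hc : 1 ≤ c) (a : ℕ → ℤ)
    (ha : PowerSeries.mk a * eulerProd 1 ^ 2 * eulerProd 2 ^ (2 * c) =
      eulerProd 4 ^ (c - 1) * eulerProd 2 ^ 3) :
    PowerSeries.map rho (PowerSeries.mk a)
      = PowerSeries.map rho (theta 1) * (PowerSeries.map rho (theta 2))^(c+1) := by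
  set A := PowerSeries.map rho (PowerSeries.mk a) with hA
  set E2 := PowerSeries.map rho (eulerProd 2) with hE2
  set E4 := PowerSeries.map rho (eulerProd 4) with hE4
  set T1 := PowerSeries.map rho (theta 1) with hT1def
  set T2 := PowerSeries.map rho (theta 2) with hT2def
  have H := congrArg (fun p => PowerSeries.map rho p) ha
  simp only [map_mul, map_pow] at H
  have g1 : (PowerSeries.map rho (eulerProd 1))^2 = E2 * T1 := by
    rw [← map_pow, gauss 1 le_rfl, map_mul]
  have g2 : E2^2 = E4 * T2 := by
    rw [hE2, ← map_pow, gauss 2 (by omega), map_mul]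
  rw [g1, pow_mul, g2, mul_pow] at H
  have h3 : E2^3 = E2^2 * E2 := by ring
  rw [h3, g2] at H
  have hT1sq : T1 * T1 = 1 := by
    rw [hT1def, map_theta]
    exact sq_one_add _
  have hT2sq : T2 * T2 = 1 := by
    rw [hT2def, map_theta]
    exact sq_one_add _
  have hT2c : T2^c * T2^c = 1 := by
    rw [← pow_add, show c + c = 2*c from by ring, pow_mul, pow_two, hT2sq, one_pow]
  have hu : IsUnit (E2 * E4^c) := (isUnit_mapE 2).mul ((isUnit_mapE 4).pow c)
  have H2 : (A * T1 * T2^c) * (E2 * E4^c) = T2 * (E2 * E4^c) := by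
    have h4c : E4^(c-1) * E4 = E4^c := by
      rw [← pow_succ, show c-1+1 = c from by omega]
    linear_combination H + T2 * E2 * h4c
  have key : A * T1 * T2^c = T2 := hu.mul_right_cancel H2
  have final : A = (A * T1 * T2^c) * (T1 * T2^c) := by
    linear_combination (-(A * (T2^c * T2^c))) * hT1sq - A * hT2c
  rw [key] at final
  rw [final, pow_succ]
  ring

lemma sq_desc : ∀ k, ∀ j : ℕ, k^2 = 2 * j^2 → k = 0 := by
  intro k
  induction k using Nat.strong_induction_on with
  | _ k ih =>
    intro j h
    rcases Nat.eq_zero_or_pos k with rfl | hk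
    · rfl
    · have hk2 : 1 ≤ k^2 := Nat.one_le_iff_ne_zero.mpr (pow_ne_zero 2 (by omega))
      have hek : Even k := by
        have h1 : Even (k^2) := ⟨j^2, by linarith⟩
        exact (Nat.even_pow.mp h1).1
      obtain ⟨k1, hk1⟩ := hek
      have hexp : k^2 = 4 * k1^2 := by rw [hk1]; ring
      have hj : j^2 = 2 * k1^2 := by linarith
      have hjk : j < k := by
        by_contra hcon
        push_neg at hcon
        have : k^2 ≤ j^2 := Nat.pow_le_pow_left hcon 2
        nlinarith
      have hj0 : j = 0 := ih j hjk k1 hj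
      subst hj0
      have : k^2 = 0 := by linarith
      exfalso
      linarith

lemma not_both (n : ℕ) (hn : 0 < n) (h1 : ∃ k : ℕ, n = k^2) (h2 : ∃ k : ℕ, n = 2*k^2) :
    False := by
  obtain ⟨k, rfl⟩ := h1
  obtain ⟨j, hj⟩ := h2
  have hk0 := sq_desc k j hj
  rw [hk0] at hn
  simp at hn

end OC




/-- Congruences modulo 4 for generalized overcubic partitions: if `a` is the
counting function of generalized overcubic partitions with c ≥ 1 colors,
determined by Σ a(n) qⁿ = f₄^{c-1} / (f₁² f₂^{2c-3}) (cleared of denominators: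
(Σ a(n) qⁿ) · f₁² · f₂^{2c} = f₄^{c-1} · f₂³), then for positive n:
a(n) ≡ 2 (mod 4) if n is a square, a(n) ≡ 2(c+1) (mod 4) if n is twice a
square, and a(n) ≡ 0 (mod 4) otherwise. -/
theorem stmt_11 (c : ℕ) (hc : 1 ≤ c) (a : ℕ → ℤ)
    (ha : PowerSeries.mk a * eulerProd 1 ^ 2 * eulerProd 2 ^ (2 * c) =
      eulerProd 4 ^ (c - 1) * eulerProd 2 ^ 3) :
    ∀ n : ℕ, 0 < n →
      ((∃ k : ℕ, n = k ^ 2) → a n ≡ 2 [ZMOD 4]) ∧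
      ((∃ k : ℕ, n = 2 * k ^ 2) → a n ≡ 2 * ((c : ℤ) + 1) [ZMOD 4]) ∧
      ((¬ ∃ k : ℕ, n = k ^ 2) → (¬ ∃ k : ℕ, n = 2 * k ^ 2) → a n ≡ 0 [ZMOD 4]) := by
  intro n hn
  classical
  have hmain := OC.main_eq c hc a ha
  have hcoeff : ((a n : ℤ) : ZMod 4)
      = PowerSeries.coeff n (PowerSeries.map OC.rho (OC.theta 1)
          * (PowerSeries.map OC.rho (OC.theta 2))^(c+1)) := by
    rw [← hmain, PowerSeries.coeff_map, PowerSeries.coeff_mk]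
    rfl
  rw [OC.map_theta, OC.map_theta] at hcoeff
  have hpowsq : ∀ V : PowerSeries (ZMod 4), ∀ j : ℕ,
      (1 + PowerSeries.C (R := ZMod 4) 2 * V)^(2*j) = 1 := by
    intro V j
    rw [pow_mul, pow_two, OC.sq_one_add, one_pow]
  -- indicator values
  set s1 : ZMod 4 := if n ≠ 0 ∧ ∃ k, n = 1 * k^2 then 1 else 0 with hs1
  set s2 : ZMod 4 := if n ≠ 0 ∧ ∃ k, n = 2 * k^2 then 1 else 0 with hs2
  have hcoeff1 : PowerSeries.coeff n (1 + PowerSeries.C (R := ZMod 4) 2 * OC.sqm 1)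
      = 2 * s1 := by
    rw [map_add, PowerSeries.coeff_one, if_neg (by omega), PowerSeries.coeff_C_mul,
      OC.sqm, PowerSeries.coeff_mk, zero_add, hs1]
  have hval : ((a n : ℤ) : ZMod 4) = 2 * s1 + (if Odd (c+1) then 2 * s2 else 0) := by
    rcases Nat.even_or_odd (c+1) with hpar | hpar
    · obtain ⟨j, hj⟩ := hpar
      rw [if_neg (by simp only [Nat.odd_iff]; omega), add_zero]
      rw [hcoeff, show c+1 = 2*j from by omega, hpowsq, mul_one, hcoeff1]
    · rw [if_pos hpar]
      obtain ⟨j, hj⟩ := hpar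
      rw [hcoeff, show c+1 = 2*j+1 from by omega, pow_succ, hpowsq, one_mul]
      have hprod : (1 + PowerSeries.C (R := ZMod 4) 2 * OC.sqm 1)
            * (1 + PowerSeries.C (R := ZMod 4) 2 * OC.sqm 2)
          = 1 + (PowerSeries.C (R := ZMod 4) 2 * OC.sqm 1
              + PowerSeries.C (R := ZMod 4) 2 * OC.sqm 2) := by
        linear_combination (OC.sqm 1 * OC.sqm 2) * OC.two_mul_two
      rw [hprod, map_add, map_add, PowerSeries.coeff_one, if_neg (by omega),
        PowerSeries.coeff_C_mul, PowerSeries.coeff_C_mul, OC.sqm, OC.sqm,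
        PowerSeries.coeff_mk, PowerSeries.coeff_mk, zero_add, hs1, hs2]
  refine ⟨?_, ?_, ?_⟩
  · intro h1
    have hns1 : s1 = 1 := by
      rw [hs1, if_pos]
      refine ⟨by omega, ?_⟩
      obtain ⟨k, hk⟩ := h1
      exact ⟨k, by omega⟩
    have hns2 : s2 = 0 := by
      rw [hs2, if_neg]
      rintro ⟨-, h2⟩
      exact OC.not_both n hn h1 h2
    have hcast : ((a n : ℤ) : ZMod 4) = ((2 : ℤ) : ZMod 4) := by
      rw [hval, hns1, hns2]
      have : ((2 : ℤ) : ZMod 4) = 2 := by norm_num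
      rw [this]
      rcases em (Odd (c+1)) with ho | ho
      · rw [if_pos ho]; ring
      · rw [if_neg ho]; ring
    exact_mod_cast (ZMod.intCast_eq_intCast_iff _ _ _).mp hcast
  · intro h2
    have hns2 : s2 = 1 := by
      rw [hs2, if_pos ⟨by omega, h2⟩]
    have hns1 : s1 = 0 := by
      rw [hs1, if_neg]
      rintro ⟨-, k, hk⟩
      exact OC.not_both n hn ⟨k, by omega⟩ h2
    have hcast : ((a n : ℤ) : ZMod 4) = ((2 * ((c:ℤ) + 1) : ℤ) : ZMod 4) := by
      rw [hval, hns1, hns2]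
      rcases Nat.even_or_odd c with ⟨d, hd⟩ | ⟨d, hd⟩
      · -- c even, c+1 odd : value 2
        rw [if_pos (by exact ⟨d, by omega⟩)]
        have hr : ((2 * ((c:ℤ) + 1) : ℤ) : ZMod 4) = 2 := by
          rw [show (2 * ((c:ℤ) + 1)) = 2 + 4 * d from by
            push_cast [show c = 2*d from by omega]; ring]
          push_cast
          rw [show ((4:ZMod 4)) = 0 from by decide]
          ring
        rw [hr]
        ring
      · -- c odd, c+1 even : value 0
        rw [if_neg (by simp only [Nat.odd_iff]; omega)]
        have hr : ((2 * ((c:ℤ) + 1) : ℤ) : ZMod 4) = 0 := by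
          rw [show (2 * ((c:ℤ) + 1)) = 4 * (d+1) from by
            push_cast [show c = 2*d+1 from by omega]; ring]
          push_cast
          rw [show ((4:ZMod 4)) = 0 from by decide]
          ring
        rw [hr]
        ring
    exact_mod_cast (ZMod.intCast_eq_intCast_iff _ _ _).mp hcast
  · intro h1 h2
    have hns1 : s1 = 0 := by
      rw [hs1, if_neg]
      rintro ⟨-, k, hk⟩
      exact h1 ⟨k, by omega⟩
    have hns2 : s2 = 0 := by
      rw [hs2, if_neg]
      rintro ⟨-, hk⟩
      exact h2 hk
    have hcast : ((a n : ℤ) : ZMod 4) = ((0 : ℤ) : ZMod 4) := by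
      rw [hval, hns1, hns2]
      have : ((0 : ℤ) : ZMod 4) = 0 := by norm_num
      rw [this]
      rcases em (Odd (c+1)) with ho | ho
      · rw [if_pos ho]; ring
      · rw [if_neg ho]; ring
    exact_mod_cast (ZMod.intCast_eq_intCast_iff _ _ _).mp hcast
end

section
/- For every positive integer n, ̄a_c(n) is even; that is, the number of generalized overcubic partitions of n is divisible by 2 for all c ≥ 1. -/
open PowerSeries

namespace OvercubicAux

open Finset

/-- If `X^k` divides `f j - 1` for each factor, it divides the product minus 1. -/
lemma dvd_prod_sub_one {R : Type*} [CommRing R] (s : Finset ℕ) (f : ℕ → PowerSeries R)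
    (k : ℕ) (h : ∀ j ∈ s, (X : PowerSeries R) ^ k ∣ (f j - 1)) :
    (X : PowerSeries R) ^ k ∣ (∏ j ∈ s, f j - 1) := by
  induction s using Finset.cons_induction with
  | empty => simp
  | cons a s ha ih =>
    rw [Finset.prod_cons]
    have key : f a * ∏ j ∈ s, f j - 1 = f a * (∏ j ∈ s, f j - 1) + (f a - 1) := by ring
    rw [key]
    exact dvd_add (Dvd.dvd.mul_left (ih fun j hj => h j (Finset.mem_cons_of_mem hj)) _)
      (h a (Finset.mem_cons_self a s))

/-- Stability of coefficients of the partial products. -/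
lemma coeff_prod_stable {R : Type*} [CommRing R] (m n N : ℕ) (hm : 1 ≤ m) (h : n ≤ N) :
    PowerSeries.coeff n (∏ j ∈ range N, (1 - (X : PowerSeries R) ^ (m * (j + 1)))) =
    PowerSeries.coeff n (∏ j ∈ range n, (1 - (X : PowerSeries R) ^ (m * (j + 1)))) := by
  rw [← Finset.prod_range_mul_prod_Ico _ h]
  have hd : (X : PowerSeries R) ^ (n + 1) ∣
      (∏ j ∈ Finset.Ico n N, (1 - (X : PowerSeries R) ^ (m * (j + 1))) - 1) := by
    apply dvd_prod_sub_one
    intro j hj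
    have hj' : n + 1 ≤ m * (j + 1) := by
      have := (Finset.mem_Ico.mp hj).1
      calc n + 1 ≤ j + 1 := by omega
        _ ≤ m * (j + 1) := Nat.le_mul_of_pos_left _ hm
    have : (1 : PowerSeries R) - X ^ (m * (j + 1)) - 1 = -(X ^ (m * (j + 1))) := by ring
    rw [this]
    exact (dvd_neg).mpr (pow_dvd_pow _ hj')
  set A := ∏ j ∈ range n, (1 - (X : PowerSeries R) ^ (m * (j + 1)))
  set B := ∏ j ∈ Finset.Ico n N, (1 - (X : PowerSeries R) ^ (m * (j + 1)))
  have : A * B = A + A * (B - 1) := by ring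
  rw [this, map_add]
  have h0 : PowerSeries.coeff n (A * (B - 1)) = 0 := by
    have : (X : PowerSeries R) ^ (n + 1) ∣ A * (B - 1) := Dvd.dvd.mul_left hd A
    exact (PowerSeries.X_pow_dvd_iff.mp this) n (Nat.lt_succ_self n)
  rw [h0, add_zero]

/-- The reduction of `eulerProd m` mod 2. -/
noncomputable def E (m : ℕ) : PowerSeries (ZMod 2) :=
  PowerSeries.map (Int.castRingHom (ZMod 2)) (eulerProd m)

lemma coeff_E (m N n : ℕ) (hm : 1 ≤ m) (h : n ≤ N) :
    PowerSeries.coeff n (E m) =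
    PowerSeries.coeff n
      (∏ j ∈ range N, (1 - (X : PowerSeries (ZMod 2)) ^ (m * (j + 1)))) := by
  rw [E, PowerSeries.coeff_map, eulerProd, PowerSeries.coeff_mk,
    ← coeff_prod_stable m n N hm h, ← PowerSeries.coeff_map]
  congr 1
  rw [map_prod]
  refine Finset.prod_congr rfl fun j _ => ?_
  rw [map_sub, map_one, map_pow, PowerSeries.map_X]

lemma constantCoeff_E (m : ℕ) : PowerSeries.coeff 0 (E m) = 1 := by
  rw [E, PowerSeries.coeff_map, eulerProd, PowerSeries.coeff_mk]
  simp

lemma E_sq (m : ℕ) (hm : 1 ≤ m) : E m ^ 2 = E (2 * m) := by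
  ext n
  set P : PowerSeries (ZMod 2) :=
    ∏ j ∈ range n, (1 - (X : PowerSeries (ZMod 2)) ^ (m * (j + 1))) with hP
  have hd : (X : PowerSeries (ZMod 2)) ^ (n + 1) ∣ (E m - P) := by
    rw [PowerSeries.X_pow_dvd_iff]
    intro i hi
    rw [map_sub, hP, coeff_E m n i hm (Nat.lt_succ_iff.mp hi), sub_self]
  have hd2 : (X : PowerSeries (ZMod 2)) ^ (n + 1) ∣ (E m ^ 2 - P ^ 2) := by
    have : E m ^ 2 - P ^ 2 = (E m - P) * (E m + P) := by ring
    rw [this]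
    exact Dvd.dvd.mul_right hd _
  have h1 : PowerSeries.coeff n (E m ^ 2) = PowerSeries.coeff n (P ^ 2) := by
    have h0 := (PowerSeries.X_pow_dvd_iff.mp hd2) n (Nat.lt_succ_self n)
    rw [map_sub] at h0
    exact sub_eq_zero.mp h0
  have hchar : (2 : PowerSeries (ZMod 2)) = 0 := by
    rw [show (2 : PowerSeries (ZMod 2)) = PowerSeries.C (R := ZMod 2) 2 from
      (map_ofNat (PowerSeries.C (R := ZMod 2)) 2).symm, show (2 : ZMod 2) = 0 from rfl, map_zero]
  have hPsq : P ^ 2 = ∏ j ∈ range n, (1 - (X : PowerSeries (ZMod 2)) ^ (2 * m * (j + 1))) := by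
    rw [hP, ← Finset.prod_pow]
    refine Finset.prod_congr rfl fun j _ => ?_
    have hk : 2 * m * (j + 1) = m * (j + 1) * 2 := by ring
    rw [hk, pow_mul]
    linear_combination (((X : PowerSeries (ZMod 2)) ^ (m * (j + 1))) ^ 2 -
      (X : PowerSeries (ZMod 2)) ^ (m * (j + 1))) * hchar
  rw [h1, hPsq, ← coeff_E (2 * m) n n (by omega) le_rfl]

end OvercubicAux

/-- For every positive integer n and every c ≥ 1, the number of generalized
overcubic partitions of n is even, where the counting function `a` is
determined by the generating function Σ a(n) qⁿ = f₄^{c-1} / (f₁² f₂^{2c-3})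
(cleared of denominators). -/
theorem stmt_12 (c : ℕ) (hc : 1 ≤ c) (a : ℕ → ℤ) (ha0 : a 0 = 1)
    (ha : PowerSeries.mk a * eulerProd 1 ^ 2 * eulerProd 2 ^ (2 * c) =
      eulerProd 4 ^ (c - 1) * eulerProd 2 ^ 3) :
    ∀ n : ℕ, 0 < n → (2 : ℤ) ∣ a n := by
  open OvercubicAux in
  have hmap := congrArg (PowerSeries.map (Int.castRingHom (ZMod 2))) ha
  rw [map_mul, map_mul, map_pow, map_pow, map_mul, map_pow, map_pow] at hmap
  set A := PowerSeries.map (Int.castRingHom (ZMod 2)) (PowerSeries.mk a) with hA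
  change A * E 1 ^ 2 * E 2 ^ (2 * c) = E 4 ^ (c - 1) * E 2 ^ 3 at hmap
  have h12 : E 1 ^ 2 = E 2 := by simpa using E_sq 1 le_rfl
  have h24 : E 2 ^ 2 = E 4 := by simpa using E_sq 2 (by norm_num)
  have hZ : E 2 * E 4 ^ c ≠ 0 := by
    intro h
    have h0 := congrArg (PowerSeries.coeff (R := ZMod 2) 0) h
    rw [PowerSeries.coeff_zero_eq_constantCoeff, map_mul, map_pow] at h0
    have e2 : constantCoeff (R := ZMod 2) (E 2) = 1 := by
      rw [← PowerSeries.coeff_zero_eq_constantCoeff]; exact constantCoeff_E 2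
    have e4 : constantCoeff (R := ZMod 2) (E 4) = 1 := by
      rw [← PowerSeries.coeff_zero_eq_constantCoeff]; exact constantCoeff_E 4
    rw [e2, e4, one_pow, one_mul] at h0
    exact one_ne_zero h0
  have hlhs : A * (E 2 * E 4 ^ c) = A * E 1 ^ 2 * E 2 ^ (2 * c) := by
    rw [h12, pow_mul, h24]
    ring
  have hrhs : E 4 ^ (c - 1) * E 2 ^ 3 = E 2 * E 4 ^ c := by
    have : E 2 ^ 3 = E 2 * E 4 := by rw [← h24]; ring
    rw [this, ← mul_assoc]
    have : E 4 ^ (c - 1) * E 2 * E 4 = E 2 * (E 4 ^ (c - 1) * E 4) := by ring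
    rw [this, ← pow_succ]
    congr 2
    omega
  have hA1 : A = 1 := by
    have : A * (E 2 * E 4 ^ c) = 1 * (E 2 * E 4 ^ c) := by
      rw [hlhs, hmap, hrhs, one_mul]
    exact mul_right_cancel₀ hZ this
  intro n hn
  have hcn := congrArg (PowerSeries.coeff (R := ZMod 2) n) hA1
  rw [hA, PowerSeries.coeff_map, PowerSeries.coeff_mk, PowerSeries.coeff_one,
    if_neg (Nat.pos_iff_ne_zero.mp hn)] at hcn
  exact (ZMod.intCast_zmod_eq_zero_iff_dvd (a n) 2).mp hcn
end

section
/- For all n ≥ 0 and i ≥ 1, ̄a_{3i+2}(3n+2) ≡ 0 (mod 6), where ̄a_c(n) is the number of generalized overcubic partitions of n with c colors for even parts. -/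
open PowerSeries

namespace OC

variable {R : Type*} [CommRing R] {S : Type*} [CommRing S]

/-- `F n` approximates `L`: eventually `X^(d+1)` divides `F n - L`. -/
def Approx (F : ℕ → PowerSeries R) (L : PowerSeries R) : Prop :=
  ∀ d n : ℕ, 2*d + 2 ≤ n → (X : PowerSeries R)^(d+1) ∣ F n - L

lemma coeff_eq_of_dvd {f g : PowerSeries R} {d k : ℕ}
    (h : (X : PowerSeries R)^(d+1) ∣ f - g) (hk : k ≤ d) :
    coeff k f = coeff k g := by
  have := (PowerSeries.X_pow_dvd_iff).1 h k (by omega)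
  rw [map_sub, sub_eq_zero] at this
  exact this

lemma Approx.coeff_eq {F : ℕ → PowerSeries R} {L : PowerSeries R} (h : Approx F L)
    {k n : ℕ} (hk : 2*k + 2 ≤ n) : coeff k (F n) = coeff k L :=
  coeff_eq_of_dvd (h k n hk) le_rfl

lemma Approx.unique {F : ℕ → PowerSeries R} {L M : PowerSeries R}
    (h1 : Approx F L) (h2 : Approx F M) : L = M := by
  ext k
  rw [← h1.coeff_eq (n := 2*k+2) le_rfl, h2.coeff_eq le_rfl]

lemma Approx.mul {F G : ℕ → PowerSeries R} {L M : PowerSeries R}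
    (h1 : Approx F L) (h2 : Approx G M) : Approx (fun n => F n * G n) (L * M) := by
  intro d n hdn
  have e : F n * G n - L * M = F n * (G n - M) + (F n - L) * M := by ring
  rw [e]
  exact dvd_add (Dvd.dvd.mul_left (h2 d n hdn) _) (Dvd.dvd.mul_right (h1 d n hdn) _)

lemma Approx.const (L : PowerSeries R) : Approx (fun _ => L) L := by
  intro d n _; simp

lemma Approx.pow {F : ℕ → PowerSeries R} {L : PowerSeries R} (h : Approx F L) (e : ℕ) :
    Approx (fun n => (F n)^e) (L^e) := by
  induction e with
  | zero => simpa using Approx.const (R := R) 1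
  | succ e ih => simpa [pow_succ] using ih.mul h

lemma Approx.map {F : ℕ → PowerSeries R} {L : PowerSeries R} (h : Approx F L) (f : R →+* S) :
    Approx (fun n => PowerSeries.map f (F n)) (PowerSeries.map f L) := by
  intro d n hdn
  have := _root_.map_dvd (PowerSeries.map f) (h d n hdn)
  simpa [map_pow, PowerSeries.map_X] using this

lemma Approx.comp {F : ℕ → PowerSeries R} {L : PowerSeries R} (h : Approx F L)
    (g : ℕ → ℕ) (hg : ∀ n, n ≤ g n) : Approx (fun n => F (g n)) L := by
  intro d n hdn
  exact h d (g n) (le_trans hdn (hg n))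

/-! ### generic partial products `∏ (1 - X^(e j))` -/

noncomputable def pgen (e : ℕ → ℕ) (N : ℕ) : PowerSeries ℤ :=
  ∏ j ∈ Finset.range N, (1 - (X : PowerSeries ℤ)^(e j))

lemma pgen_succ (e : ℕ → ℕ) (N : ℕ) :
    pgen e (N+1) = pgen e N * (1 - (X : PowerSeries ℤ)^(e N)) := by
  simp [pgen, Finset.prod_range_succ]

lemma pgen_stable (e : ℕ → ℕ) (he : ∀ j, j + 1 ≤ e j) {N n : ℕ} (h : N ≤ n) :
    (X : PowerSeries ℤ)^(N+1) ∣ pgen e n - pgen e N := by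
  induction n with
  | zero =>
    have : N = 0 := by omega
    simp [this]
  | succ n ih =>
    rcases Nat.lt_or_ge N (n+1) with hN | hN
    · have hNn : N ≤ n := by omega
      have h1 := ih hNn
      have e2 : pgen e (n+1) - pgen e N
          = (pgen e n - pgen e N) - pgen e n * (X : PowerSeries ℤ)^(e n) := by
        rw [pgen_succ]; ring
      rw [e2]
      refine dvd_sub h1 (Dvd.dvd.mul_left ?_ _)
      exact pow_dvd_pow _ (by have := he n; omega)
    · have : N = n+1 := by omega
      simp [this]

noncomputable def pep (m : ℕ) : ℕ → PowerSeries ℤ := pgen (fun j => m * (j+1))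

lemma coeff_eulerProd_s14 (m n : ℕ) :
    coeff n (eulerProd m) = coeff n (pep m n) := by
  simp [eulerProd, pep, pgen, coeff_mk]

lemma approx_eulerProd {m : ℕ} (hm : 1 ≤ m) : Approx (pep m) (eulerProd m) := by
  intro d n hdn
  rw [PowerSeries.X_pow_dvd_iff]
  intro k hk
  have hk' : k ≤ d := by omega
  have h1 : coeff k (pep m n) = coeff k (pep m k) := by
    refine coeff_eq_of_dvd (d := k) ?_ le_rfl
    exact pgen_stable _ (fun j => by nlinarith) (by omega)
  rw [map_sub, coeff_eulerProd_s14, h1, sub_self]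

lemma constantCoeff_eulerProd (m : ℕ) : constantCoeff (eulerProd m) = 1 := by
  have : constantCoeff (eulerProd m) = coeff 0 (eulerProd m) := by
    simp [PowerSeries.coeff_zero_eq_constantCoeff]
  rw [this, coeff_eulerProd_s14]
  simp [pep, pgen]

end OC
namespace OC

/-- Gaussian binomial `[m choose k]` in the variable `t = X^4`, over `ℤ⟦X⟧`. -/
noncomputable def gb4 : ℕ → ℕ → PowerSeries ℤ
  | 0, 0 => 1
  | 0, _+1 => 0
  | m+1, 0 => gb4 m 0
  | m+1, k+1 => gb4 m k + (X : PowerSeries ℤ)^(4*(k+1)) * gb4 m (k+1)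

lemma gb4_zero (m : ℕ) : gb4 m 0 = 1 := by
  induction m with
  | zero => rfl
  | succ m ih => rw [gb4, ih]

lemma gb4_pascal (m k : ℕ) :
    gb4 (m+1) (k+1) = gb4 m k + (X : PowerSeries ℤ)^(4*(k+1)) * gb4 m (k+1) := rfl

lemma gb4_eq_zero : ∀ m k : ℕ, m < k → gb4 m k = 0 := by
  intro m
  induction m with
  | zero => intro k hk; match k, hk with | k+1, _ => rfl
  | succ m ih =>
    intro k hk
    match k, hk with
    | k+1, hk =>
      rw [gb4_pascal, ih k (by omega), ih (k+1) (by omega)]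
      ring

lemma gb4_diag (m : ℕ) : gb4 m m = 1 := by
  induction m with
  | zero => rfl
  | succ m ih => rw [gb4_pascal, ih, gb4_eq_zero m (m+1) (by omega)]; ring

lemma gb4_one (m : ℕ) : gb4 m 1 * (1 - (X : PowerSeries ℤ)^4) = 1 - (X : PowerSeries ℤ)^(4*m) := by
  induction m with
  | zero => simp [gb4]
  | succ m ih =>
    rw [gb4_pascal, gb4_zero]
    have h4 : 4*(m+1) = 4*m + 4 := by ring
    rw [h4, pow_add]
    linear_combination (X : PowerSeries ℤ)^(4*1) * ih

lemma gb4_pascal' : ∀ m k : ℕ, k ≤ m →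
    gb4 (m+1) (k+1) = (X : PowerSeries ℤ)^(4*(m-k)) * gb4 m k + gb4 m (k+1) := by
  intro m
  induction m with
  | zero =>
    intro k hk
    have : k = 0 := by omega
    subst this
    simp [gb4_pascal, gb4_zero, gb4_eq_zero 0 1 (by omega)]
  | succ m ih =>
    intro k hk
    match k with
    | 0 =>
      rw [gb4_pascal, gb4_zero, Nat.sub_zero]
      simp only [zero_add]
      have hg := gb4_one (m+1)
      linear_combination - hg
    | k+1 =>
      have hk' : k ≤ m := by omega
      rcases Nat.lt_or_ge k m with hlt | hge
      · rw [show (m+1) - (k+1) = m - k from by omega]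
        have h2 : 4*(k+1+1) + 4*(m-(k+1)) = 4*(m-k) + 4*(k+1) := by omega
        calc gb4 (m+1+1) (k+1+1)
            = gb4 (m+1) (k+1) + X^(4*(k+1+1)) * gb4 (m+1) (k+1+1) := gb4_pascal (m+1) (k+1)
          _ = (X^(4*(m-k)) * gb4 m k + gb4 m (k+1))
              + X^(4*(k+1+1)) * (X^(4*(m-(k+1))) * gb4 m (k+1) + gb4 m (k+1+1)) := by
              rw [ih k hk', ih (k+1) hlt]
          _ = X^(4*(m-k)) * gb4 m k + gb4 m (k+1)
              + X^(4*(k+1+1) + 4*(m-(k+1))) * gb4 m (k+1) + X^(4*(k+1+1)) * gb4 m (k+1+1) := by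
              rw [pow_add]; ring
          _ = X^(4*(m-k)) * gb4 m k + gb4 m (k+1)
              + X^(4*(m-k) + 4*(k+1)) * gb4 m (k+1) + X^(4*(k+1+1)) * gb4 m (k+1+1) := by
              rw [h2]
          _ = X^(4*(m-k)) * (gb4 m k + X^(4*(k+1)) * gb4 m (k+1))
              + (gb4 m (k+1) + X^(4*(k+1+1)) * gb4 m (k+1+1)) := by
              rw [pow_add]; ring
          _ = X^(4*(m-k)) * gb4 (m+1) (k+1) + gb4 (m+1) (k+1+1) := by
              rw [← gb4_pascal, ← gb4_pascal]
      · have : k = m := by omega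
        subst this
        have e1 : (k+1) - (k+1) = 0 := by omega
        rw [e1, gb4_diag, gb4_diag, gb4_eq_zero (k+1) (k+2) (by omega)]
        ring

lemma gb4_special_one (n : ℕ) :
    gb4 (2*n+2) 1 = (1 + (X : PowerSeries ℤ)^(4*(2*n+1))) * gb4 (2*n) 0
      + (X : PowerSeries ℤ)^4 * gb4 (2*n) 1 := by
  have h := gb4_pascal' (2*n+1) 0 (by omega)
  have e1 : (2*n+1) - 0 = 2*n+1 := by omega
  rw [h, e1, gb4_zero, gb4_pascal, gb4_zero]
  have : (4:ℕ)*1 = 4 := by norm_num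
  rw [this]
  ring

lemma gb4_central (n j : ℕ) (hj : j ≤ 2*n) :
    gb4 (2*n+2) (j+2) = (X : PowerSeries ℤ)^(4*(2*n-j)) * gb4 (2*n) j
      + (1 + (X : PowerSeries ℤ)^(4*(2*n+1))) * gb4 (2*n) (j+1)
      + (X : PowerSeries ℤ)^(4*(j+2)) * gb4 (2*n) (j+2) := by
  have h1 : gb4 (2*n+2) (j+2) = (X : PowerSeries ℤ)^(4*((2*n+1)-(j+1))) * gb4 (2*n+1) (j+1)
      + gb4 (2*n+1) (j+2) := gb4_pascal' (2*n+1) (j+1) (by omega)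
  have e1 : (2*n+1)-(j+1) = 2*n - j := by omega
  rw [h1, e1, gb4_pascal (2*n) j, gb4_pascal (2*n) (j+1)]
  have h2 : 4*(2*n-j) + 4*(j+1) = 4*(2*n+1) := by omega
  calc X^(4*(2*n-j)) * (gb4 (2*n) j + X^(4*(j+1)) * gb4 (2*n) (j+1))
        + (gb4 (2*n) (j+1) + X^(4*(j+2)) * gb4 (2*n) (j+2))
      = X^(4*(2*n-j)) * gb4 (2*n) j + (1 + X^(4*(2*n-j) + 4*(j+1))) * gb4 (2*n) (j+1)
        + X^(4*(j+2)) * gb4 (2*n) (j+2) := by rw [pow_add]; ring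
    _ = _ := by rw [h2]

/-! ### stabilization of `gb4` and its limit `L4` -/

lemma coeff_X_pow_mul_eq_zero {g : PowerSeries ℤ} {e j : ℕ} (h : j < e) :
    coeff j ((X : PowerSeries ℤ)^e * g) = 0 := by
  have : (X : PowerSeries ℤ)^(j+1) ∣ X^e * g :=
    dvd_mul_of_dvd_left (pow_dvd_pow _ (by omega)) _
  exact PowerSeries.X_pow_dvd_iff.1 this j (by omega)

lemma gb4_stable_a {j m k : ℕ} (h : j < 4*(m+1-k)) :
    coeff j (gb4 (m+1) k) = coeff j (gb4 m k) := by
  match k with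
  | 0 => rw [gb4_zero, gb4_zero]
  | k+1 =>
    rcases Nat.lt_or_ge m (k+1) with hm | hm
    · rcases Nat.lt_or_ge m k with h2 | h2
      · rw [gb4_eq_zero (m+1) (k+1) (by omega), gb4_eq_zero m (k+1) (by omega)]
      · have : k = m := by omega
        subst this
        omega  -- h : j < 4*(k+1-(k+1)) = 0, contradiction
    · rw [gb4_pascal' m k (by omega)]
      have e1 : j < 4*(m-k) := by omega
      rw [map_add, coeff_X_pow_mul_eq_zero e1, zero_add]

lemma gb4_stable_b {j m k : ℕ} (h : j < 4*(k+1)) :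
    coeff j (gb4 (m+1) (k+1)) = coeff j (gb4 m k) := by
  rw [gb4_pascal, map_add, coeff_X_pow_mul_eq_zero h, add_zero]

lemma gb4_stable_up {j m k : ℕ} (h : j < 4*(m-k)) :
    ∀ t, coeff j (gb4 (m+t) k) = coeff j (gb4 m k) := by
  intro t
  induction t with
  | zero => rfl
  | succ t ih =>
    have : j < 4*((m+t)+1-k) := by omega
    rw [show m+(t+1) = (m+t)+1 from rfl, gb4_stable_a this, ih]

lemma gb4_stable_diag {j m k : ℕ} (h : j < 4*k) :
    ∀ t, coeff j (gb4 (m+t) (k+t)) = coeff j (gb4 m k) := by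
  intro t
  induction t with
  | zero => rfl
  | succ t ih =>
    have hb : j < 4*((k+t)+1) := by omega
    rw [show m+(t+1) = (m+t)+1 from rfl, show k+(t+1) = (k+t)+1 from rfl,
      gb4_stable_b hb, ih]

lemma gb4_coeff_congr {j m k m' k' : ℕ} (h1 : j < 4*k) (h2 : j < 4*(m-k))
    (h1' : j < 4*k') (h2' : j < 4*(m'-k')) :
    coeff j (gb4 m k) = coeff j (gb4 m' k') := by
  -- connect both to (K + D, K), K = max k k', D = max (m-k) (m'-k')
  set K := max k k' with hK
  set D := max (m-k) (m'-k') with hD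
  have conn : ∀ a b : ℕ, j < 4*b → j < 4*(a-b) → a - b ≤ D → b ≤ K →
      coeff j (gb4 a b) = coeff j (gb4 (K+D) K) := by
    intro a b hb hab habD hbK
    have step1 : coeff j (gb4 (a + (K-b)) K) = coeff j (gb4 a b) := by
      have := gb4_stable_diag (j := j) (m := a) (k := b) hb (K - b)
      rwa [show b + (K-b) = K by omega] at this
    have step2 : coeff j (gb4 (a + (K-b) + (K + D - (a + (K-b)))) K)
        = coeff j (gb4 (a + (K-b)) K) := by
      apply gb4_stable_up
      omega
    have e : a + (K-b) + (K + D - (a + (K-b))) = K + D := by omega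
    rw [← step1, ← e, step2]
  rw [conn m k h1 h2 (by omega) (by omega), conn m' k' h1' h2' (by omega) (by omega)]

/-- the limit of the central Gaussian binomials: `1/((q⁴;q⁴))_∞`. -/
noncomputable def L4 : PowerSeries ℤ :=
  PowerSeries.mk fun j => coeff j (gb4 (2*j+2) (j+1))

lemma coeff_L4 {j m k : ℕ} (h1 : j < 4*k) (h2 : j < 4*(m-k)) :
    coeff j (gb4 m k) = coeff j L4 := by
  rw [L4, coeff_mk]
  exact gb4_coeff_congr h1 h2 (by omega) (by omega)

lemma gb4_mul : ∀ m k : ℕ, k ≤ m → gb4 m k * pep 4 k * pep 4 (m-k) = pep 4 m := by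
  intro m
  induction m with
  | zero =>
    intro k hk
    have : k = 0 := by omega
    subst this
    simp [gb4, pep, pgen]
  | succ m ih =>
    intro k hk
    match k with
    | 0 =>
      rw [gb4_zero]
      have e : m+1-0 = m+1 := by omega
      rw [e]
      simp [pep, pgen]
    | k+1 =>
      rcases Nat.lt_or_ge k m with hlt | hge
      · have hk1 : k+1 ≤ m := by omega
        have e1 : m+1-(k+1) = m-k := by omega
        have e2 : (m-k) = (m-(k+1)) + 1 := by omega
        rw [gb4_pascal, e1]
        have hpk : pep 4 (k+1) = pep 4 k * (1 - (X:PowerSeries ℤ)^(4*(k+1))) := by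
          rw [pep, pgen_succ]
        have hpm : pep 4 (m-k) = pep 4 (m-(k+1)) * (1 - (X:PowerSeries ℤ)^(4*((m-(k+1))+1))) := by
          rw [e2, pep, pgen_succ]
        have e3 : 4*((m-(k+1))+1) = 4*(m-k) := by omega
        have hpm1 : pep 4 (m+1) = pep 4 m * (1 - (X:PowerSeries ℤ)^(4*(m+1))) := by
          rw [pep, pgen_succ]
        have h1' := ih k (by omega)
        have h1 : gb4 m k * pep 4 k * pep 4 (m-k) = pep 4 m := h1'
        have h2' := ih (k+1) hk1
        have h2 : gb4 m (k+1) * pep 4 (k+1) * pep 4 (m-(k+1)) = pep 4 m := h2'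
        have key : (gb4 m k + X^(4*(k+1)) * gb4 m (k+1)) * pep 4 (k+1) * pep 4 (m-k)
            = pep 4 m * (1 - X^(4*(k+1))) + X^(4*(k+1)) * (pep 4 m * (1 - X^(4*(m-k)))) := by
          rw [hpk]
          calc (gb4 m k + X^(4*(k+1)) * gb4 m (k+1)) * (pep 4 k * (1 - X^(4*(k+1)))) * pep 4 (m-k)
              = (gb4 m k * pep 4 k * pep 4 (m-k)) * (1 - X^(4*(k+1)))
                + X^(4*(k+1)) * (gb4 m (k+1) * (1 - X^(4*(k+1))) * pep 4 k * pep 4 (m-k)) := by ring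
            _ = pep 4 m * (1 - X^(4*(k+1)))
                + X^(4*(k+1)) * (gb4 m (k+1) * (1-X^(4*(k+1))) * pep 4 k * pep 4 (m-k)) := by rw [h1]
            _ = _ := by
                rw [hpm, e3]
                have : gb4 m (k+1) * (1 - X^(4*(k+1))) * pep 4 k *
                    (pep 4 (m-(k+1)) * (1 - X^(4*(m-k))))
                    = (gb4 m (k+1) * (pep 4 k * (1-X^(4*(k+1)))) * pep 4 (m-(k+1))) *
                      (1 - X^(4*(m-k))) := by ring
                rw [this, ← hpk, h2]
        rw [key, hpm1]
        have e4 : 4*(k+1) + 4*(m-k) = 4*(m+1) := by omega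
        calc pep 4 m * (1 - X^(4*(k+1))) + X^(4*(k+1)) * (pep 4 m * (1 - X^(4*(m-k))))
            = pep 4 m * (1 - X^(4*(k+1)) + X^(4*(k+1)) - X^(4*(k+1) + 4*(m-k))) := by
              rw [pow_add]; ring
          _ = _ := by rw [e4]; ring
      · have : k = m := by omega
        subst this
        have e : k+1-(k+1) = 0 := by omega
        rw [e, gb4_diag]
        simp [pep, pgen]

lemma L4_mul_eulerProd : L4 * eulerProd 4 = 1 := by
  have ha1 : Approx (fun n => gb4 (2*n+2) (n+1)) L4 := by
    intro d n hdn
    rw [PowerSeries.X_pow_dvd_iff]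
    intro k hk
    rw [map_sub, sub_eq_zero]
    exact coeff_L4 (by omega) (by omega)
  have ha2 : Approx (fun n => pep 4 (n+1)) (eulerProd 4) :=
    (approx_eulerProd (by omega)).comp (fun n => n+1) (fun n => by show n ≤ n+1; omega)
  have ha3 : Approx (fun n => pep 4 (2*n+2)) (eulerProd 4) :=
    (approx_eulerProd (by omega)).comp (fun n => 2*n+2) (fun n => by show n ≤ 2*n+2; omega)
  have key : (fun n => gb4 (2*n+2) (n+1) * pep 4 (n+1) * pep 4 (n+1)) = fun n => pep 4 (2*n+2) := by
    funext n
    have := gb4_mul (2*n+2) (n+1) (by omega)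
    rwa [show 2*n+2-(n+1) = n+1 by omega] at this
  have h1 : Approx (fun n => pep 4 (2*n+2)) (L4 * eulerProd 4 * eulerProd 4) := by
    rw [← key]
    exact (ha1.mul ha2).mul ha2
  have h2 : L4 * eulerProd 4 * eulerProd 4 = eulerProd 4 := h1.unique ha3
  have hne : eulerProd 4 ≠ 0 := by
    intro h
    have := constantCoeff_eulerProd 4
    rw [h] at this
    simp at this
  have : (L4 * eulerProd 4 - 1) * eulerProd 4 = 0 := by
    rw [sub_mul, h2, one_mul, sub_self]
  rcases mul_eq_zero.1 this with h | h
  · exact sub_eq_zero.1 h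
  · exact absurd h hne

end OC
namespace OC

/-! ### the exponent function `en n r = 2k² - k`, `k = r - n` -/

def en (n r : ℕ) : ℕ := (2*(r-n)^2 - (r-n)) + (2*(n-r)^2 + (n-r))

lemma two_mul_sq (a : ℕ) : 2*a ≤ 2*a^2 := by
  rcases Nat.eq_zero_or_pos a with rfl | ha
  · simp
  · calc 2*a = 2*a*1 := by ring
      _ ≤ 2*a*a := Nat.mul_le_mul_left _ ha
      _ = 2*a^2 := by ring

lemma en_cast (n r : ℕ) : (en n r : ℤ) = 2*((r:ℤ)-n)^2 - ((r:ℤ)-n) := by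
  unfold en
  rcases le_total n r with h | h
  · have h2 : n - r = 0 := by omega
    have h3 := two_mul_sq (r-n)
    have hc : ((r - n : ℕ) : ℤ) = (r:ℤ) - n := by omega
    rw [h2, Nat.cast_add, Nat.cast_sub (by omega)]
    push_cast [hc]
    ring
  · have h2 : r - n = 0 := by omega
    have hc : ((n - r : ℕ) : ℤ) = (n:ℤ) - r := by omega
    rw [h2]
    push_cast [hc]
    ring

lemma en_eq_en {n r n' r' : ℕ} (h : (r:ℤ) - n = (r':ℤ) - n') : en n r = en n' r' := by
  have h1 := en_cast n r
  have h2 := en_cast n' r'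
  have : (en n r : ℤ) = (en n' r' : ℤ) := by rw [h1, h2, h]
  exact_mod_cast this

lemma en_shift (n r : ℕ) : en (n+1) (r+1) = en n r := en_eq_en (by push_cast; ring)

lemma en_zero_zero : en 0 0 = 0 := by simp [en]

lemma en_ge (n r : ℕ) : r - n ≤ en n r ∧ n - r ≤ en n r := by
  unfold en
  obtain ⟨A, hA⟩ : ∃ A, (r-n)^2 = A := ⟨_, rfl⟩
  obtain ⟨B, hB⟩ : ∃ B, (n-r)^2 = B := ⟨_, rfl⟩
  have h1 := two_mul_sq (r-n)
  have h2 := two_mul_sq (n-r)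
  rw [hA] at h1 ⊢
  rw [hB] at h2 ⊢
  omega

lemma eA (n j : ℕ) (hj : j ≤ 2*n) : en (n+1) (j+2) + 4*(2*n-j) = en n j + (4*n+1) := by
  have h1 := en_cast (n+1) (j+2)
  have h2 := en_cast n j
  have hcast : ((2*n - j : ℕ) : ℤ) = 2*(n:ℤ) - j := by omega
  have h3 : (en (n+1) (j+2) : ℤ) = (en n j : ℤ) + (4*(n:ℤ)+1) - 4*(2*(n:ℤ)-(j:ℤ)) := by
    rw [h1, h2]; push_cast; ring
  omega

lemma eB (n j : ℕ) : en (n+1) (j+2) = en n (j+1) := en_shift n (j+1)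

lemma eC (n j : ℕ) : en (n+1) (j+2) + 4*(j+2) = en n (j+2) + (4*n+3) := by
  have h1 := en_cast (n+1) (j+2)
  have h2 := en_cast n (j+2)
  have h3 : (en (n+1) (j+2) : ℤ) = (en n (j+2) : ℤ) + (4*(n:ℤ)+3) - 4*((j:ℤ)+2) := by
    rw [h1, h2]; push_cast; ring
  omega

lemma eT1 (n : ℕ) : en (n+1) 1 = en n 0 := en_eq_en (by push_cast; ring)

lemma eT1b (n : ℕ) : en n 0 + 4 = en n 1 + (4*n+3) := by
  have h1 := en_cast n 0
  have h2 := en_cast n 1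
  have h3 : (en n 0 : ℤ) + 4 = (en n 1 : ℤ) + (4*(n:ℤ)+3) := by
    rw [h1, h2]; push_cast; ring
  omega

lemma eT0 (n : ℕ) : en (n+1) 0 = en n 0 + (4*n+3) := by
  have h1 := en_cast (n+1) 0
  have h2 := en_cast n 0
  have h3 : (en (n+1) 0 : ℤ) = (en n 0 : ℤ) + (4*(n:ℤ)+3) := by
    rw [h1, h2]; push_cast; ring
  omega

lemma eTop (n : ℕ) : en (n+1) 0 = 2*(n+1)^2 + (n+1) := by
  have h1 := en_cast (n+1) 0
  have h3 : (en (n+1) 0 : ℤ) = ((2*(n+1)^2 + (n+1) : ℕ) : ℤ) := by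
    rw [h1]; push_cast; ring
  exact_mod_cast h3

lemma eBot (n : ℕ) : en (n+1) (2*n+2) = 2*(n+1)^2 - (n+1) := by
  have h1 := en_cast (n+1) (2*n+2)
  have hle := two_mul_sq (n+1)
  have h3 : (en (n+1) (2*n+2) : ℤ) = ((2*(n+1)^2 - (n+1) : ℕ) : ℤ) := by
    rw [h1, Nat.cast_sub (by omega)]
    push_cast; ring
  exact_mod_cast h3

/-! ### partial theta function -/

noncomputable def psifin (n : ℕ) : PowerSeries ℤ :=
  ∑ r ∈ Finset.range (2*n+1), (-1 : PowerSeries ℤ)^(n+r) * X^(en n r)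

lemma psifin_zero : psifin 0 = 1 := by
  simp [psifin, en_zero_zero]

lemma psifin_succ (n : ℕ) : psifin (n+1) = psifin n
    + (-1 : PowerSeries ℤ)^(n+1) * (X^(2*(n+1)^2 - (n+1)) + X^(2*(n+1)^2 + (n+1))) := by
  have h0 : psifin (n+1)
      = ∑ i ∈ Finset.range (2*(n+1)), (-1 : PowerSeries ℤ)^((n+1)+(i+1)) * X^(en (n+1) (i+1))
        + (-1 : PowerSeries ℤ)^((n+1)+0) * X^(en (n+1) 0) := by
    rw [psifin]
    exact Finset.sum_range_succ' _ (2*(n+1))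
  have h1 : ∑ i ∈ Finset.range (2*(n+1)), (-1 : PowerSeries ℤ)^((n+1)+(i+1)) * X^(en (n+1) (i+1))
      = ∑ i ∈ Finset.range (2*n+1), (-1 : PowerSeries ℤ)^((n+1)+(i+1)) * X^(en (n+1) (i+1))
        + (-1 : PowerSeries ℤ)^((n+1)+(2*n+1+1)) * X^(en (n+1) (2*n+1+1)) := by
    rw [show 2*(n+1) = (2*n+1)+1 from by omega]
    exact Finset.sum_range_succ _ (2*n+1)
  have h2 : ∑ i ∈ Finset.range (2*n+1), (-1 : PowerSeries ℤ)^((n+1)+(i+1)) * X^(en (n+1) (i+1))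
      = psifin n := by
    rw [psifin]
    refine Finset.sum_congr rfl ?_
    intro i _
    rw [en_shift, show (n+1)+(i+1) = (n+i)+2 from by omega, pow_add]
    ring_nf
  have hsign : ((-1 : PowerSeries ℤ))^((n+1)+(2*n+1+1)) = (-1 : PowerSeries ℤ)^(n+1) := by
    rw [show (n+1)+(2*n+1+1) = (n+1) + 2*(n+1) from by omega, pow_add, pow_mul]
    norm_num
  have hexp : en (n+1) (2*n+1+1) = 2*(n+1)^2 - (n+1) := by
    rw [show 2*n+1+1 = 2*n+2 from by omega]; exact eBot n
  rw [h0, h1, h2, hsign, hexp, Nat.add_zero, eTop]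
  ring

lemma psifin_stable {N n : ℕ} (h : N ≤ n) :
    (X : PowerSeries ℤ)^(N+1) ∣ psifin n - psifin N := by
  induction n with
  | zero =>
    have hN0 : N = 0 := by omega
    subst hN0
    simp
  | succ n ih =>
    rcases Nat.lt_or_ge N (n+1) with hN | hN
    · have h1 := ih (by omega)
      rw [psifin_succ]
      have hle := two_mul_sq (n+1)
      have d1 : (X : PowerSeries ℤ)^(N+1) ∣ X^(2*(n+1)^2 - (n+1)) :=
        pow_dvd_pow _ (by omega)
      have d2 : (X : PowerSeries ℤ)^(N+1) ∣ X^(2*(n+1)^2 + (n+1)) :=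
        pow_dvd_pow _ (by omega)
      have : psifin n + (-1 : PowerSeries ℤ)^(n+1) * (X^(2*(n+1)^2 - (n+1)) + X^(2*(n+1)^2 + (n+1)))
          - psifin N = (psifin n - psifin N)
          + (-1 : PowerSeries ℤ)^(n+1) * (X^(2*(n+1)^2 - (n+1)) + X^(2*(n+1)^2 + (n+1))) := by
        ring
      rw [this]
      exact dvd_add h1 (Dvd.dvd.mul_left (dvd_add d1 d2) _)
    · have : N = n+1 := by omega
      simp [this]

noncomputable def Psi : PowerSeries ℤ := PowerSeries.mk fun d => coeff d (psifin d)

lemma approx_psifin : Approx psifin Psi := by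
  intro d n hdn
  rw [PowerSeries.X_pow_dvd_iff]
  intro k hk
  rw [map_sub, sub_eq_zero, Psi, coeff_mk]
  exact coeff_eq_of_dvd (d := k) (psifin_stable (by omega)) le_rfl

lemma coeff_neg_one_pow_mul (k j : ℕ) (f : PowerSeries ℤ) :
    coeff j ((-1 : PowerSeries ℤ)^k * f) = (-1 : ℤ)^k * coeff j f := by
  rcases Nat.even_or_odd k with hk | hk
  · rw [hk.neg_one_pow, hk.neg_one_pow]
    simp
  · rw [hk.neg_one_pow, hk.neg_one_pow]
    simp

lemma mod3_aux (M : ℕ) : (2*M^2 - M) % 3 ≠ 2 ∧ (2*M^2 + M) % 3 ≠ 2 := by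
  obtain ⟨q, c, hc, rfl⟩ : ∃ q c, c < 3 ∧ M = 3*q + c := ⟨M/3, M%3, by omega, by omega⟩
  obtain ⟨Q, hQ⟩ : ∃ Q, Q = q^2 := ⟨_, rfl⟩
  have h0 : c = 0 ∨ c = 1 ∨ c = 2 := by omega
  rcases h0 with rfl | rfl | rfl
  · have hsq : (3*q+0)^2 = 9*Q := by rw [hQ]; ring
    rw [hsq]; omega
  · have hsq : (3*q+1)^2 = 9*Q + 6*q + 1 := by rw [hQ]; ring
    rw [hsq]; omega
  · have hsq : (3*q+2)^2 = 9*Q + 12*q + 4 := by rw [hQ]; ring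
    rw [hsq]; omega

lemma coeff_psifin_two_mod_three {j : ℕ} (hj : j % 3 = 2) (N : ℕ) :
    coeff j (psifin N) = 0 := by
  induction N with
  | zero =>
    rw [psifin_zero]
    rw [PowerSeries.coeff_one]
    simp only [if_neg (show j ≠ 0 from by omega)]
  | succ N ih =>
    rw [psifin_succ, map_add, ih, zero_add, coeff_neg_one_pow_mul, map_add]
    have h1 := (mod3_aux (N+1)).1
    have h2 := (mod3_aux (N+1)).2
    rw [PowerSeries.coeff_X_pow, PowerSeries.coeff_X_pow]
    rw [if_neg (show j ≠ 2*(N+1)^2 - (N+1) from by omega),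
      if_neg (show j ≠ 2*(N+1)^2 + (N+1) from by omega)]
    simp

lemma coeff_Psi_two_mod_three {j : ℕ} (hj : j % 3 = 2) : coeff j Psi = 0 := by
  rw [Psi, coeff_mk]
  exact coeff_psifin_two_mod_three hj j

/-! ### odd euler product -/

noncomputable def podd : ℕ → PowerSeries ℤ := pgen (fun j => 2*j+1)

noncomputable def OddP : PowerSeries ℤ := PowerSeries.mk fun n => coeff n (podd n)

lemma approx_podd : Approx podd OddP := by
  intro d n hdn
  rw [PowerSeries.X_pow_dvd_iff]
  intro k hk
  rw [map_sub, sub_eq_zero, OddP, coeff_mk]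
  exact coeff_eq_of_dvd (d := k)
    (pgen_stable _ (fun j => by omega) (show k ≤ n from by omega)) le_rfl

lemma pep_succ (m N : ℕ) : pep m (N+1) = pep m N * (1 - (X:PowerSeries ℤ)^(m*(N+1))) := by
  simp only [pep]
  exact pgen_succ _ N

lemma podd_succ (N : ℕ) : podd (N+1) = podd N * (1 - (X:PowerSeries ℤ)^(2*N+1)) := by
  simp only [podd]
  exact pgen_succ _ N

lemma pep_split (n : ℕ) : pep 1 (2*n) = podd n * pep 2 n := by
  induction n with
  | zero => simp [pep, podd, pgen]
  | succ n ih =>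
    have e1 : 2*(n+1) = (2*n+1)+1 := by omega
    rw [e1, pep_succ 1 (2*n+1), pep_succ 1 (2*n), ih, podd_succ n, pep_succ 2 n]
    have e2 : (1:ℕ)*(2*n+1) = 2*n+1 := by omega
    have e3 : (1:ℕ)*(2*n+1+1) = 2*(n+1) := by omega
    rw [e2, e3]
    ring

lemma eulerProd_one_split : eulerProd 1 = OddP * eulerProd 2 := by
  have h1 : Approx (fun n => pep 1 (2*n)) (eulerProd 1) :=
    (approx_eulerProd (by omega)).comp (fun n => 2*n) (fun n => by show n ≤ 2*n; omega)
  have h2 : Approx (fun n => podd n * pep 2 n) (OddP * eulerProd 2) :=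
    approx_podd.mul (approx_eulerProd (by omega))
  have h3 : Approx (fun n => pep 1 (2*n)) (OddP * eulerProd 2) := by
    have : (fun n => podd n * pep 2 n) = fun n => pep 1 (2*n) := by
      funext n; exact (pep_split n).symm
    rwa [this] at h2
  exact h1.unique h3

end OC
namespace OC

/-! ### finite Jacobi triple product -/

noncomputable def tT (n r : ℕ) : PowerSeries ℤ :=
  (-1 : PowerSeries ℤ)^(n+r) * X^(en n r) * gb4 (2*n) r

noncomputable def aT (n s : ℕ) : PowerSeries ℤ :=
  -((-1 : PowerSeries ℤ)^(n+s) * X^(en n s + (4*n+1)) * gb4 (2*n) s)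

noncomputable def bT (n s : ℕ) : PowerSeries ℤ :=
  (-1 : PowerSeries ℤ)^(n+s) * (X^(en n s) + X^(en n s + (8*n+4))) * gb4 (2*n) s

noncomputable def cT (n s : ℕ) : PowerSeries ℤ :=
  -((-1 : PowerSeries ℤ)^(n+s) * X^(en n s + (4*n+3)) * gb4 (2*n) s)

noncomputable def sfin (n : ℕ) : PowerSeries ℤ := ∑ r ∈ Finset.range (2*n+1), tT n r

lemma step1 (n j : ℕ) (hj : j ≤ 2*n) :
    tT (n+1) (j+2) = aT n j + bT n (j+1) + cT n (j+2) := by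
  have hs0 : (-1 : PowerSeries ℤ)^(n+1+(j+2)) = -(-1 : PowerSeries ℤ)^(n+j) := by
    rw [show n+1+(j+2) = (n+j)+3 from by omega, pow_add]; ring
  have hs1 : (-1 : PowerSeries ℤ)^(n+(j+1)) = -(-1 : PowerSeries ℤ)^(n+j) := by
    rw [show n+(j+1) = (n+j)+1 from by omega, pow_add]; ring
  have hs2 : (-1 : PowerSeries ℤ)^(n+(j+2)) = (-1 : PowerSeries ℤ)^(n+j) := by
    rw [show n+(j+2) = (n+j)+2 from by omega, pow_add]; ring
  have hE1 : (X : PowerSeries ℤ)^(en n j + (4*n+1))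
      = X^(en (n+1) (j+2)) * X^(4*(2*n-j)) := by
    rw [← pow_add, ← eA n j hj]
  have hE2 : (X : PowerSeries ℤ)^(en n (j+1)) = X^(en (n+1) (j+2)) := by
    rw [eB n j]
  have hE3 : (X : PowerSeries ℤ)^(en n (j+1) + (8*n+4))
      = X^(en (n+1) (j+2)) * X^(4*(2*n+1)) := by
    rw [← pow_add, show en (n+1) (j+2) + 4*(2*n+1) = en n (j+1) + (8*n+4) from by
      have := eB n j; omega]
  have hE4 : (X : PowerSeries ℤ)^(en n (j+2) + (4*n+3))
      = X^(en (n+1) (j+2)) * X^(4*(j+2)) := by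
    rw [← pow_add, ← eC n j]
  rw [tT, show 2*(n+1) = 2*n+2 from by omega, gb4_central n j hj, aT, bT, cT,
    hs0, hs1, hs2, hE1, hE2, hE3, hE4]
  ring

lemma step2 (n : ℕ) : tT (n+1) 1 = bT n 0 + cT n 1 := by
  have hs0 : (-1 : PowerSeries ℤ)^(n+1+1) = (-1 : PowerSeries ℤ)^(n+0) := by
    rw [show n+1+1 = (n+0)+2 from by omega, pow_add]; ring
  have hs1 : (-1 : PowerSeries ℤ)^(n+1) = -(-1 : PowerSeries ℤ)^(n+0) := by
    rw [show n+1 = (n+0)+1 from by omega, pow_add]; ring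
  have hG1 : (X : PowerSeries ℤ)^(en n 0 + (8*n+4)) = X^(en n 0) * X^(4*(2*n+1)) := by
    rw [← pow_add, show en n 0 + 4*(2*n+1) = en n 0 + (8*n+4) from by omega]
  have hG2 : (X : PowerSeries ℤ)^(en n 1 + (4*n+3)) = X^(en n 0) * X^4 := by
    rw [← pow_add, ← eT1b n]
  rw [tT, show 2*(n+1) = 2*n+2 from by omega, gb4_special_one n, eT1 n, bT, cT,
    hs0, hs1, hG1, hG2]
  ring

lemma step3 (n : ℕ) : tT (n+1) 0 = cT n 0 := by
  rw [tT, cT, show 2*(n+1) = 2*n+2 from by omega, show (2*n+2) = (2*n+1)+1 from by omega,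
    gb4_zero, gb4_zero, eT0 n, show n+1+0 = (n+0)+1 from by omega, pow_succ, pow_add]
  ring

lemma bT_top (n : ℕ) : bT n (2*n+1) = 0 := by
  rw [bT, gb4_eq_zero (2*n) (2*n+1) (by omega)]; ring

lemma cT_top1 (n : ℕ) : cT n (2*n+1) = 0 := by
  rw [cT, gb4_eq_zero (2*n) (2*n+1) (by omega)]; ring

lemma cT_top2 (n : ℕ) : cT n (2*n+2) = 0 := by
  rw [cT, gb4_eq_zero (2*n) (2*n+2) (by omega)]; ring

lemma rhs_term (n s : ℕ) :
    (1 - (X : PowerSeries ℤ)^(4*n+1)) * (1 - (X : PowerSeries ℤ)^(4*n+3)) * tT n s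
      = aT n s + bT n s + cT n s := by
  have h1 : (X : PowerSeries ℤ)^(en n s + (4*n+1)) = X^(en n s) * X^(4*n+1) := pow_add _ _ _
  have h2 : (X : PowerSeries ℤ)^(en n s + (4*n+3)) = X^(en n s) * X^(4*n+3) := pow_add _ _ _
  have h3 : (X : PowerSeries ℤ)^(en n s + (8*n+4)) = X^(en n s) * (X^(4*n+1) * X^(4*n+3)) := by
    rw [show en n s + (8*n+4) = en n s + ((4*n+1)+(4*n+3)) from by omega, pow_add, pow_add]
  rw [tT, aT, bT, cT, h1, h2, h3]
  ring

lemma sfin_succ (n : ℕ) :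
    sfin (n+1) = (1 - (X : PowerSeries ℤ)^(4*n+1)) * (1 - (X : PowerSeries ℤ)^(4*n+3)) * sfin n := by
  have hL : sfin (n+1) = (∑ i ∈ Finset.range (2*n+1), tT (n+1) (i+2) + tT (n+1) 1)
      + tT (n+1) 0 := by
    rw [sfin, show 2*(n+1)+1 = (2*n+2)+1 from by omega,
      Finset.sum_range_succ' (fun r => tT (n+1) r) (2*n+2),
      show 2*n+2 = (2*n+1)+1 from by omega,
      Finset.sum_range_succ' (fun i => tT (n+1) (i+1)) (2*n+1)]
  have hS : ∑ i ∈ Finset.range (2*n+1), tT (n+1) (i+2)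
      = ∑ i ∈ Finset.range (2*n+1), (aT n i + bT n (i+1) + cT n (i+2)) :=
    Finset.sum_congr rfl fun i hi => step1 n i (by
      have := Finset.mem_range.1 hi; omega)
  have hb : ∑ i ∈ Finset.range (2*n+1), bT n (i+1) + bT n 0
      = ∑ s ∈ Finset.range (2*n+1), bT n s := by
    rw [← Finset.sum_range_succ' (bT n) (2*n+1), Finset.sum_range_succ (bT n) (2*n+1),
      bT_top, add_zero]
  have hc : ∑ i ∈ Finset.range (2*n+1), cT n (i+2) + cT n 1 + cT n 0
      = ∑ s ∈ Finset.range (2*n+1), cT n s := by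
    rw [← Finset.sum_range_succ' (fun i => cT n (i+1)) (2*n+1)]
    rw [← Finset.sum_range_succ' (cT n) (2*n+2)]
    rw [Finset.sum_range_succ (cT n) (2*n+2), Finset.sum_range_succ (cT n) (2*n+1),
      cT_top1, cT_top2, add_zero, add_zero]
  calc sfin (n+1)
      = (∑ i ∈ Finset.range (2*n+1), (aT n i + bT n (i+1) + cT n (i+2)) + tT (n+1) 1)
        + tT (n+1) 0 := by rw [hL, hS]
    _ = (∑ i ∈ Finset.range (2*n+1), (aT n i + bT n (i+1) + cT n (i+2)) + (bT n 0 + cT n 1))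
        + cT n 0 := by rw [step2, step3]
    _ = ∑ i ∈ Finset.range (2*n+1), aT n i
        + (∑ i ∈ Finset.range (2*n+1), bT n (i+1) + bT n 0)
        + (∑ i ∈ Finset.range (2*n+1), cT n (i+2) + cT n 1 + cT n 0) := by
        rw [Finset.sum_add_distrib, Finset.sum_add_distrib]
        ring
    _ = ∑ i ∈ Finset.range (2*n+1), aT n i + ∑ s ∈ Finset.range (2*n+1), bT n s
        + ∑ s ∈ Finset.range (2*n+1), cT n s := by rw [hb, hc]
    _ = ∑ s ∈ Finset.range (2*n+1), (aT n s + bT n s + cT n s) := by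
        rw [Finset.sum_add_distrib, Finset.sum_add_distrib]
    _ = ∑ s ∈ Finset.range (2*n+1),
          (1 - (X : PowerSeries ℤ)^(4*n+1)) * (1 - (X : PowerSeries ℤ)^(4*n+3)) * tT n s :=
        Finset.sum_congr rfl fun s _ => (rhs_term n s).symm
    _ = _ := by rw [sfin, Finset.mul_sum]

lemma jtp_fin : ∀ n, podd (2*n) = sfin n := by
  intro n
  induction n with
  | zero =>
    have h1 : podd (2*0) = 1 := by
      rw [show (2*0 : ℕ) = 0 from rfl]
      simp [podd, pgen]
    have h2 : sfin 0 = 1 := by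
      rw [sfin]
      rw [show 2*0+1 = 1 from rfl, Finset.sum_range_one, tT, en_zero_zero,
        show (2*0 : ℕ) = 0 from rfl, gb4_zero]
      simp
    rw [h1, h2]
  | succ n ih =>
    rw [show 2*(n+1) = (2*n+1)+1 from by omega, podd_succ, podd_succ, ih, sfin_succ,
      show 2*(2*n)+1 = 4*n+1 from by omega, show 2*(2*n+1)+1 = 4*n+3 from by omega]
    ring

lemma approx_sfin : Approx sfin (Psi * L4) := by
  intro d n hdn
  have key : sfin n - psifin n * L4
      = ∑ r ∈ Finset.range (2*n+1),
          ((-1 : PowerSeries ℤ)^(n+r) * X^(en n r) * (gb4 (2*n) r - L4)) := by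
    rw [sfin, psifin, Finset.sum_mul, ← Finset.sum_sub_distrib]
    refine Finset.sum_congr rfl fun r _ => ?_
    rw [tT]; ring
  have hd1 : (X : PowerSeries ℤ)^(d+1) ∣ sfin n - psifin n * L4 := by
    rw [key]
    refine Finset.dvd_sum fun r hr => ?_
    rcases le_or_gt (en n r) d with he | he
    · have h1 := (en_ge n r).1
      have h2 := (en_ge n r).2
      have hdvd : (X : PowerSeries ℤ)^(d+1) ∣ gb4 (2*n) r - L4 := by
        rw [PowerSeries.X_pow_dvd_iff]
        intro k hk
        rw [map_sub, sub_eq_zero]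
        exact coeff_L4 (by omega) (by omega)
      exact Dvd.dvd.mul_left hdvd _
    · exact Dvd.dvd.mul_right (Dvd.dvd.mul_left (pow_dvd_pow _ (by omega)) _) _
  have hsplit : sfin n - Psi * L4 = (sfin n - psifin n * L4) + (psifin n - Psi) * L4 := by ring
  rw [hsplit]
  exact dvd_add hd1 (Dvd.dvd.mul_right (approx_psifin d n hdn) _)

lemma OddP_eq : OddP = Psi * L4 := by
  have h1 : Approx (fun n => podd (2*n)) OddP :=
    approx_podd.comp _ (fun n => by show n ≤ 2*n; omega)
  have h2 : Approx (fun n => podd (2*n)) (Psi * L4) := by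
    have he : (fun n => podd (2*n)) = sfin := funext jtp_fin
    rw [he]
    exact approx_sfin
  exact h1.unique h2

theorem gauss_s14 : eulerProd 1 * eulerProd 4 = Psi * eulerProd 2 := by
  have h2 : OddP * eulerProd 4 = Psi := by
    rw [OddP_eq, mul_assoc, L4_mul_eulerProd, mul_one]
  calc eulerProd 1 * eulerProd 4 = OddP * eulerProd 2 * eulerProd 4 := by
        rw [eulerProd_one_split]
    _ = (OddP * eulerProd 4) * eulerProd 2 := by ring
    _ = Psi * eulerProd 2 := by rw [h2]

end OC
namespace OC

/-! ### reduction mod p -/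

lemma map_pgen {R : Type*} [CommRing R] (φ : ℤ →+* R) (e : ℕ → ℕ) (N : ℕ) :
    PowerSeries.map φ (pgen e N) = ∏ j ∈ Finset.range N, (1 - (X : PowerSeries R)^(e j)) := by
  rw [pgen, map_prod]
  refine Finset.prod_congr rfl fun j _ => ?_
  rw [map_sub, map_one, map_pow, PowerSeries.map_X]

lemma constantCoeff_map_eulerProd {R : Type*} [CommRing R] (φ : ℤ →+* R) (m : ℕ) :
    constantCoeff (PowerSeries.map φ (eulerProd m)) = 1 := by
  have h0 : coeff 0 (PowerSeries.map φ (eulerProd m)) = φ (coeff 0 (eulerProd m)) :=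
    PowerSeries.coeff_map _ _ _
  have h1 : coeff 0 (eulerProd m) = 1 := by
    rw [PowerSeries.coeff_zero_eq_constantCoeff_apply, constantCoeff_eulerProd]
  have h2 : coeff 0 (PowerSeries.map φ (eulerProd m)) = 1 := by rw [h0, h1, map_one]
  rwa [PowerSeries.coeff_zero_eq_constantCoeff_apply] at h2

lemma three_eq_zero : (3 : PowerSeries (ZMod 3)) = 0 := by
  have h : (3 : PowerSeries (ZMod 3)) = PowerSeries.C 3 := by rw [map_ofNat]
  rw [h, show (3 : ZMod 3) = 0 from by decide, map_zero]

lemma two_eq_zero : (2 : PowerSeries (ZMod 2)) = 0 := by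
  have h : (2 : PowerSeries (ZMod 2)) = PowerSeries.C 2 := by rw [map_ofNat]
  rw [h, show (2 : ZMod 2) = 0 from by decide, map_zero]

lemma cube_one_sub (Y : PowerSeries (ZMod 3)) : (1 - Y)^3 = 1 - Y^3 := by
  have h : (1 - Y)^3 = 1 - Y^3 + 3*(Y^2 - Y) * (1 + 0*Y) := by ring
  rw [h, three_eq_zero]
  ring

lemma square_one_sub (Y : PowerSeries (ZMod 2)) : (1 - Y)^2 = 1 - Y^2 := by
  have h : (1 - Y)^2 = 1 - Y^2 + 2*(Y^2 - Y) := by ring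
  rw [h, two_eq_zero]
  ring

lemma euler_cube (m : ℕ) (hm : 1 ≤ m) :
    (PowerSeries.map (Int.castRingHom (ZMod 3)) (eulerProd m))^3
      = PowerSeries.map (Int.castRingHom (ZMod 3)) (eulerProd (3*m)) := by
  set φ := Int.castRingHom (ZMod 3)
  have h1 : Approx (fun n => PowerSeries.map φ (pep m n)) (PowerSeries.map φ (eulerProd m)) :=
    (approx_eulerProd hm).map φ
  have h2 := h1.pow 3
  have h3 : Approx (fun n => PowerSeries.map φ (pep (3*m) n))
      (PowerSeries.map φ (eulerProd (3*m))) :=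
    (approx_eulerProd (by omega)).map φ
  have key : (fun n => (PowerSeries.map φ (pep m n))^3)
      = fun n => PowerSeries.map φ (pep (3*m) n) := by
    funext n
    rw [pep, pep, map_pgen, map_pgen, ← Finset.prod_pow]
    refine Finset.prod_congr rfl fun j _ => ?_
    rw [cube_one_sub, ← pow_mul, show m*(j+1)*3 = 3*m*(j+1) from by ring]
  rw [key] at h2
  exact h2.unique h3

lemma euler_square (m : ℕ) (hm : 1 ≤ m) :
    (PowerSeries.map (Int.castRingHom (ZMod 2)) (eulerProd m))^2
      = PowerSeries.map (Int.castRingHom (ZMod 2)) (eulerProd (2*m)) := by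
  set φ := Int.castRingHom (ZMod 2)
  have h1 : Approx (fun n => PowerSeries.map φ (pep m n)) (PowerSeries.map φ (eulerProd m)) :=
    (approx_eulerProd hm).map φ
  have h2 := h1.pow 2
  have h3 : Approx (fun n => PowerSeries.map φ (pep (2*m) n))
      (PowerSeries.map φ (eulerProd (2*m))) :=
    (approx_eulerProd (by omega)).map φ
  have key : (fun n => (PowerSeries.map φ (pep m n))^2)
      = fun n => PowerSeries.map φ (pep (2*m) n) := by
    funext n
    rw [pep, pep, map_pgen, map_pgen, ← Finset.prod_pow]
    refine Finset.prod_congr rfl fun j _ => ?_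
    rw [square_one_sub, ← pow_mul, show m*(j+1)*2 = 2*m*(j+1) from by ring]
  rw [key] at h2
  exact h2.unique h3

/-! ### support predicates mod 3 -/

def M3 (f : PowerSeries (ZMod 3)) : Prop := ∀ n : ℕ, ¬ (3 ∣ n) → coeff n f = 0

def N2 (f : PowerSeries (ZMod 3)) : Prop := ∀ n : ℕ, n % 3 = 2 → coeff n f = 0

lemma M3.one : M3 1 := by
  intro n hn
  rw [PowerSeries.coeff_one, if_neg (show n ≠ 0 from by omega)]

lemma M3.mul {f g : PowerSeries (ZMod 3)} (hf : M3 f) (hg : M3 g) : M3 (f * g) := by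
  intro n hn
  rw [PowerSeries.coeff_mul]
  refine Finset.sum_eq_zero fun p hp => ?_
  have hmem := Finset.HasAntidiagonal.mem_antidiagonal.1 hp
  by_cases h3 : 3 ∣ p.1
  · rw [hg p.2 (by omega), mul_zero]
  · rw [hf p.1 h3, zero_mul]

lemma M3.pow {f : PowerSeries (ZMod 3)} (hf : M3 f) (e : ℕ) : M3 (f^e) := by
  induction e with
  | zero => simpa using M3.one
  | succ e ih =>
    rw [pow_succ]
    exact ih.mul hf

lemma M3.inv {f : PowerSeries (ZMod 3)} (hf : M3 f) (hu : constantCoeff f ≠ 0) :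
    M3 f⁻¹ := by
  intro n
  induction n using Nat.strong_induction_on with
  | _ n ih =>
    intro hn
    have h1 : coeff n (f⁻¹ * f) = 0 := by
      rw [PowerSeries.inv_mul_cancel f hu, PowerSeries.coeff_one,
        if_neg (show n ≠ 0 from by omega)]
    rw [PowerSeries.coeff_mul] at h1
    have h2 : ∀ p ∈ Finset.HasAntidiagonal.antidiagonal n, p ≠ (n, 0) →
        coeff p.1 f⁻¹ * coeff p.2 f = 0 := by
      intro p hp hne
      have hmem := Finset.HasAntidiagonal.mem_antidiagonal.1 hp
      by_cases h3 : 3 ∣ p.2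
      · have hne2 : p.2 ≠ 0 := by
          intro h0
          apply hne
          have : p.1 = n := by omega
          rw [Prod.ext_iff]
          exact ⟨this, h0⟩
        have hlt : p.1 < n := by omega
        rw [ih p.1 hlt (by omega), zero_mul]
      · rw [hf p.2 h3, mul_zero]
    rw [Finset.sum_eq_single_of_mem (n, 0) (by simp) h2] at h1
    rw [PowerSeries.coeff_zero_eq_constantCoeff] at h1
    rcases mul_eq_zero.1 h1 with h | h
    · exact h
    · exact absurd h hu

lemma M3.mul_N2 {f g : PowerSeries (ZMod 3)} (hf : M3 f) (hg : N2 g) : N2 (f * g) := by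
  intro n hn
  rw [PowerSeries.coeff_mul]
  refine Finset.sum_eq_zero fun p hp => ?_
  have hmem := Finset.HasAntidiagonal.mem_antidiagonal.1 hp
  by_cases h3 : 3 ∣ p.1
  · rw [hg p.2 (by omega), mul_zero]
  · rw [hf p.1 h3, zero_mul]

lemma M3_one_sub_pow {E : ℕ} (h : 3 ∣ E) : M3 (1 - (X : PowerSeries (ZMod 3))^E) := by
  intro n hn
  rw [map_sub, PowerSeries.coeff_one, PowerSeries.coeff_X_pow,
    if_neg (show n ≠ 0 from by omega), if_neg (show n ≠ E from by omega)]
  ring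

lemma M3_map_pgen {e : ℕ → ℕ} (he : ∀ j, 3 ∣ e j) (N : ℕ) :
    M3 (PowerSeries.map (Int.castRingHom (ZMod 3)) (pgen e N)) := by
  induction N with
  | zero => simpa [pgen] using M3.one
  | succ N ih =>
    rw [pgen_succ, map_mul]
    refine ih.mul ?_
    rw [map_sub, map_one, map_pow, PowerSeries.map_X]
    exact M3_one_sub_pow (he N)

lemma M3_euler_three_mul (m : ℕ) :
    M3 (PowerSeries.map (Int.castRingHom (ZMod 3)) (eulerProd (3*m))) := by
  intro n hn
  rw [PowerSeries.coeff_map, coeff_eulerProd_s14]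
  have := M3_map_pgen (e := fun j => 3*m*(j+1)) (fun j => ⟨m*(j+1), by ring⟩) n n hn
  rw [pep]
  rw [PowerSeries.coeff_map] at this
  exact this

end OC

namespace OC

lemma mod2_core (i : ℕ) (A : PowerSeries (ZMod 2))
    (hm : A * (PowerSeries.map (Int.castRingHom (ZMod 2)) (eulerProd 1))^2
        * (PowerSeries.map (Int.castRingHom (ZMod 2)) (eulerProd 2))^(6*i+1)
      = (PowerSeries.map (Int.castRingHom (ZMod 2)) (eulerProd 4))^(3*i+1)) :
    A = 1 := by
  have e12 : (PowerSeries.map (Int.castRingHom (ZMod 2)) (eulerProd 1))^2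
      = PowerSeries.map (Int.castRingHom (ZMod 2)) (eulerProd 2) := by
    have := euler_square 1 (by omega)
    rwa [show 2*1 = 2 from rfl] at this
  have e24 : (PowerSeries.map (Int.castRingHom (ZMod 2)) (eulerProd 2))^2
      = PowerSeries.map (Int.castRingHom (ZMod 2)) (eulerProd 4) := by
    have := euler_square 2 (by omega)
    rwa [show 2*2 = 4 from rfl] at this
  have key : A * (PowerSeries.map (Int.castRingHom (ZMod 2)) (eulerProd 2))^(6*i+2)
      = (PowerSeries.map (Int.castRingHom (ZMod 2)) (eulerProd 2))^(6*i+2) := by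
    calc A * (PowerSeries.map (Int.castRingHom (ZMod 2)) (eulerProd 2))^(6*i+2)
        = A * (PowerSeries.map (Int.castRingHom (ZMod 2)) (eulerProd 1))^2
          * (PowerSeries.map (Int.castRingHom (ZMod 2)) (eulerProd 2))^(6*i+1) := by
          rw [show 6*i+2 = (6*i+1)+1 from by omega, pow_succ, ← e12]
          ring
      _ = (PowerSeries.map (Int.castRingHom (ZMod 2)) (eulerProd 4))^(3*i+1) := hm
      _ = ((PowerSeries.map (Int.castRingHom (ZMod 2)) (eulerProd 2))^2)^(3*i+1) := by
          rw [e24]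
      _ = (PowerSeries.map (Int.castRingHom (ZMod 2)) (eulerProd 2))^(6*i+2) := by
          rw [← pow_mul, show 2*(3*i+1) = 6*i+2 from by omega]
  have hne : PowerSeries.map (Int.castRingHom (ZMod 2)) (eulerProd 2) ≠ 0 := by
    intro h
    have hcc := constantCoeff_map_eulerProd (Int.castRingHom (ZMod 2)) 2
    rw [h, map_zero] at hcc
    exact zero_ne_one hcc
  have h0 : (A - 1) * (PowerSeries.map (Int.castRingHom (ZMod 2)) (eulerProd 2))^(6*i+2) = 0 := by
    linear_combination key
  rcases mul_eq_zero.1 h0 with h | h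
  · exact sub_eq_zero.1 h
  · exact absurd h (pow_ne_zero _ hne)

lemma mod3_core (i : ℕ) (A : PowerSeries (ZMod 3))
    (hm : A * (PowerSeries.map (Int.castRingHom (ZMod 3)) (eulerProd 1))^2
        * (PowerSeries.map (Int.castRingHom (ZMod 3)) (eulerProd 2))^(6*i+1)
      = (PowerSeries.map (Int.castRingHom (ZMod 3)) (eulerProd 4))^(3*i+1)) :
    N2 A := by
  have c1 : (PowerSeries.map (Int.castRingHom (ZMod 3)) (eulerProd 1))^3
      = PowerSeries.map (Int.castRingHom (ZMod 3)) (eulerProd 3) := by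
    have := euler_cube 1 (by omega)
    rwa [show 3*1 = 3 from rfl] at this
  have c2 : (PowerSeries.map (Int.castRingHom (ZMod 3)) (eulerProd 2))^3
      = PowerSeries.map (Int.castRingHom (ZMod 3)) (eulerProd 6) := by
    have := euler_cube 2 (by omega)
    rwa [show 3*2 = 6 from rfl] at this
  have c4 : (PowerSeries.map (Int.castRingHom (ZMod 3)) (eulerProd 4))^3
      = PowerSeries.map (Int.castRingHom (ZMod 3)) (eulerProd 12) := by
    have := euler_cube 4 (by omega)
    rwa [show 3*4 = 12 from rfl] at this
  have hG : PowerSeries.map (Int.castRingHom (ZMod 3)) (eulerProd 1)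
        * PowerSeries.map (Int.castRingHom (ZMod 3)) (eulerProd 4)
      = PowerSeries.map (Int.castRingHom (ZMod 3)) Psi
        * PowerSeries.map (Int.castRingHom (ZMod 3)) (eulerProd 2) := by
    have := congrArg (PowerSeries.map (Int.castRingHom (ZMod 3))) gauss_s14
    simpa only [map_mul] using this
  have hp1 : (PowerSeries.map (Int.castRingHom (ZMod 3)) (eulerProd 2))^(6*i+1)
      = (PowerSeries.map (Int.castRingHom (ZMod 3)) (eulerProd 6))^(2*i)
        * PowerSeries.map (Int.castRingHom (ZMod 3)) (eulerProd 2) := by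
    rw [← c2, ← pow_mul, ← pow_succ, show 3*(2*i)+1 = 6*i+1 from by omega]
  have hp2 : (PowerSeries.map (Int.castRingHom (ZMod 3)) (eulerProd 4))^(3*i+1)
      = (PowerSeries.map (Int.castRingHom (ZMod 3)) (eulerProd 12))^i
        * PowerSeries.map (Int.castRingHom (ZMod 3)) (eulerProd 4) := by
    rw [← c4, ← pow_mul, ← pow_succ]
  set U := PowerSeries.map (Int.castRingHom (ZMod 3)) (eulerProd 3)
    * (PowerSeries.map (Int.castRingHom (ZMod 3)) (eulerProd 6))^(2*i) with hU
  have main : A * U * PowerSeries.map (Int.castRingHom (ZMod 3)) (eulerProd 2)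
      = ((PowerSeries.map (Int.castRingHom (ZMod 3)) (eulerProd 12))^i
          * PowerSeries.map (Int.castRingHom (ZMod 3)) Psi)
        * PowerSeries.map (Int.castRingHom (ZMod 3)) (eulerProd 2) := by
    calc A * U * PowerSeries.map (Int.castRingHom (ZMod 3)) (eulerProd 2)
        = A * (PowerSeries.map (Int.castRingHom (ZMod 3)) (eulerProd 1))^2
          * ((PowerSeries.map (Int.castRingHom (ZMod 3)) (eulerProd 6))^(2*i)
            * PowerSeries.map (Int.castRingHom (ZMod 3)) (eulerProd 2))
          * PowerSeries.map (Int.castRingHom (ZMod 3)) (eulerProd 1) := by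
          rw [hU, ← c1]; ring
      _ = A * (PowerSeries.map (Int.castRingHom (ZMod 3)) (eulerProd 1))^2
          * (PowerSeries.map (Int.castRingHom (ZMod 3)) (eulerProd 2))^(6*i+1)
          * PowerSeries.map (Int.castRingHom (ZMod 3)) (eulerProd 1) := by
          rw [hp1]
      _ = (PowerSeries.map (Int.castRingHom (ZMod 3)) (eulerProd 4))^(3*i+1)
          * PowerSeries.map (Int.castRingHom (ZMod 3)) (eulerProd 1) := by
          rw [hm]
      _ = (PowerSeries.map (Int.castRingHom (ZMod 3)) (eulerProd 12))^i
          * (PowerSeries.map (Int.castRingHom (ZMod 3)) (eulerProd 1)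
            * PowerSeries.map (Int.castRingHom (ZMod 3)) (eulerProd 4)) := by
          rw [hp2]; ring
      _ = (PowerSeries.map (Int.castRingHom (ZMod 3)) (eulerProd 12))^i
          * (PowerSeries.map (Int.castRingHom (ZMod 3)) Psi
            * PowerSeries.map (Int.castRingHom (ZMod 3)) (eulerProd 2)) := by
          rw [hG]
      _ = _ := by ring
  have hne2 : PowerSeries.map (Int.castRingHom (ZMod 3)) (eulerProd 2) ≠ 0 := by
    intro h
    have hcc := constantCoeff_map_eulerProd (Int.castRingHom (ZMod 3)) 2
    rw [h, map_zero] at hcc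
    exact zero_ne_one hcc
  have main2 : A * U = (PowerSeries.map (Int.castRingHom (ZMod 3)) (eulerProd 12))^i
      * PowerSeries.map (Int.castRingHom (ZMod 3)) Psi := mul_right_cancel₀ hne2 main
  have hccU : constantCoeff U ≠ 0 := by
    rw [hU, map_mul, map_pow, constantCoeff_map_eulerProd, constantCoeff_map_eulerProd]
    simp
  have hAeq : A = ((PowerSeries.map (Int.castRingHom (ZMod 3)) (eulerProd 12))^i * U⁻¹)
      * PowerSeries.map (Int.castRingHom (ZMod 3)) Psi := by
    have hinv := PowerSeries.inv_mul_cancel U hccU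
    calc A = A * (U⁻¹ * U) := by rw [hinv, mul_one]
      _ = (A * U) * U⁻¹ := by ring
      _ = ((PowerSeries.map (Int.castRingHom (ZMod 3)) (eulerProd 12))^i
          * PowerSeries.map (Int.castRingHom (ZMod 3)) Psi) * U⁻¹ := by rw [main2]
      _ = _ := by ring
  have hM12 : M3 (PowerSeries.map (Int.castRingHom (ZMod 3)) (eulerProd 12)) := by
    have := M3_euler_three_mul 4
    rwa [show 3*4 = 12 from rfl] at this
  have hM3 : M3 (PowerSeries.map (Int.castRingHom (ZMod 3)) (eulerProd 3)) := by
    have := M3_euler_three_mul 1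
    rwa [show 3*1 = 3 from rfl] at this
  have hM6 : M3 (PowerSeries.map (Int.castRingHom (ZMod 3)) (eulerProd 6)) := by
    have := M3_euler_three_mul 2
    rwa [show 3*2 = 6 from rfl] at this
  have hMU : M3 U := by
    rw [hU]
    exact hM3.mul (hM6.pow (2*i))
  have hN2P : N2 (PowerSeries.map (Int.castRingHom (ZMod 3)) Psi) := by
    intro k hk
    rw [PowerSeries.coeff_map, coeff_Psi_two_mod_three hk, map_zero]
  rw [hAeq]
  exact M3.mul_N2 ((hM12.pow i).mul (hMU.inv hccU)) hN2P

end OC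

/-- For all n ≥ 0 and i ≥ 1, ā_{3i+2}(3n+2) ≡ 0 (mod 6), where ā_c is
determined by the generating function Σ ā_c(n) qⁿ = f₄^{c-1} / (f₁² f₂^{2c-3}),
written with cleared denominators (for c = 3i+2, 2c-3 = 6i+1 ≥ 0). -/
theorem stmt_14 (i : ℕ) (hi : 1 ≤ i) (a : ℕ → ℤ)
    (ha : PowerSeries.mk a * eulerProd 1 ^ 2 * eulerProd 2 ^ (2 * (3 * i + 2) - 3) =
      eulerProd 4 ^ (3 * i + 2 - 1)) :
    ∀ n : ℕ, (6 : ℤ) ∣ a (3 * n + 2) := by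
  intro n
  rw [show 2 * (3 * i + 2) - 3 = 6*i+1 from by omega,
    show 3 * i + 2 - 1 = 3*i+1 from by omega] at ha
  have h2 : (2:ℤ) ∣ a (3*n+2) := by
    have hm := congrArg (PowerSeries.map (Int.castRingHom (ZMod 2))) ha
    simp only [map_mul, map_pow] at hm
    have hA1 := OC.mod2_core i (PowerSeries.map (Int.castRingHom (ZMod 2)) (PowerSeries.mk a)) hm
    have hc : PowerSeries.coeff (3*n+2)
        (PowerSeries.map (Int.castRingHom (ZMod 2)) (PowerSeries.mk a)) = 0 := by
      rw [hA1, PowerSeries.coeff_one, if_neg (show 3*n+2 ≠ 0 from by omega)]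
    rw [PowerSeries.coeff_map, PowerSeries.coeff_mk] at hc
    simp only [Int.coe_castRingHom] at hc
    exact_mod_cast (ZMod.intCast_zmod_eq_zero_iff_dvd _ 2).1 hc
  have h3 : (3:ℤ) ∣ a (3*n+2) := by
    have hm := congrArg (PowerSeries.map (Int.castRingHom (ZMod 3))) ha
    simp only [map_mul, map_pow] at hm
    have hN2 := OC.mod3_core i (PowerSeries.map (Int.castRingHom (ZMod 3)) (PowerSeries.mk a)) hm
    have hc := hN2 (3*n+2) (by omega)
    rw [PowerSeries.coeff_map, PowerSeries.coeff_mk] at hc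
    simp only [Int.coe_castRingHom] at hc
    exact_mod_cast (ZMod.intCast_zmod_eq_zero_iff_dvd _ 3).1 hc
  omega
end
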